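/- arXiv:2605.24878 — 3 statements merged into one kernel-verified Lean document; each statement's English description precedes it below -/
import Mathlib

section
/- (Entropy bias.) Fix B>0. There exists a structural constant C (also depending on B) such that for every 0<λ≤1, every q∈𝒬, and every y∈ℝ^{2Q+1} with ‖y‖_∞≤B: 0 ≤ H_q⁰(y) − H_q^λ(y) ≤ C·λ(1+|log λ|). -/
open MeasureTheory
open scoped Classical

noncomputable section

namespace MM

/-- Inventory index type `{-Q, …, Q}`. -/
abbrev QI (Q : ℕ) := {q : ℤ // q ∈ Finset.Icc (-(Q : ℤ)) (Q : ℤ)}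

/-- Vectors in `ℝ^{2Q+1}`, indexed by the inventory set. -/
abbrev Vec (Q : ℕ) := QI Q → ℝ

/-- The quote rectangle `A = [δ̲, δ̄]²`. -/
def Aset (dlo dhi : ℝ) : Set (ℝ × ℝ) := Set.Icc dlo dhi ×ˢ Set.Icc dlo dhi

/-- Extension of a vector by zero outside the inventory set. -/
def ext {Q : ℕ} (y : Vec Q) (z : ℤ) : ℝ :=
  if h : z ∈ Finset.Icc (-(Q : ℤ)) (Q : ℤ) then y ⟨z, h⟩ else 0

/-- `Λ_q^a(x) = Λ^a(x)·1_{q > -Q}`. -/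
def Lqa {Q : ℕ} (La : ℝ → ℝ) (q : QI Q) (x : ℝ) : ℝ :=
  if -(Q : ℤ) < q.1 then La x else 0

/-- `Λ_q^b(x) = Λ^b(x)·1_{q < Q}`. -/
def Lqb {Q : ℕ} (Lb : ℝ → ℝ) (q : QI Q) (x : ℝ) : ℝ :=
  if q.1 < (Q : ℤ) then Lb x else 0

/-- `Δ_q^a(y, δ)`. -/
def DelA {Q : ℕ} (y : Vec Q) (δ : ℝ × ℝ) (q : QI Q) : ℝ :=
  if -(Q : ℤ) < q.1 then δ.1 + ext y (q.1 - 1) - y q else 0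

/-- `Δ_q^b(y, δ)`. -/
def DelB {Q : ℕ} (y : Vec Q) (δ : ℝ × ℝ) (q : QI Q) : ℝ :=
  if q.1 < (Q : ℤ) then δ.2 + ext y (q.1 + 1) - y q else 0

/-- The deterministic-action Hamiltonian `H_q(y, δ)`. -/
def Ham {Q : ℕ} (σ γ η : ℝ) (La Lb : ℝ → ℝ) (y : Vec Q) (δ : ℝ × ℝ) (q : QI Q) : ℝ :=
  -η * (q.1 : ℝ) ^ 2 - γ * σ ^ 2 / 2 * (q.1 : ℝ) ^ 2
    + Lqa La q δ.1 / γ * (1 - Real.exp (-γ * DelA y δ q))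
    + Lqb Lb q δ.2 / γ * (1 - Real.exp (-γ * DelB y δ q))

/-- The hard Hamiltonian `H_q⁰(y) = sup_{δ ∈ A} H_q(y, δ)`. -/
def H0 {Q : ℕ} (σ γ η dlo dhi : ℝ) (La Lb : ℝ → ℝ) (y : Vec Q) (q : QI Q) : ℝ :=
  ⨆ δ : Aset dlo dhi, Ham σ γ η La Lb y δ.1 q

/-- The soft (entropy-regularized) Hamiltonian `H_q^λ(y)`. -/
def Hlam {Q : ℕ} (σ γ η : ℝ) (La Lb : ℝ → ℝ) (ν : Measure (ℝ × ℝ)) (lam : ℝ)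
    (y : Vec Q) (q : QI Q) : ℝ :=
  lam * Real.log (∫ δ, Real.exp (Ham σ γ η La Lb y δ q / lam) ∂ν)

/-- The generator matrix `K^δ`. -/
def Kmat (Q : ℕ) (σ γ η : ℝ) (La Lb : ℝ → ℝ) (δ : ℝ × ℝ) :
    Matrix (QI Q) (QI Q) ℝ := fun i j =>
  (if j = i then
      γ ^ 2 * σ ^ 2 / 2 * (i.1 : ℝ) ^ 2 + γ * η * (i.1 : ℝ) ^ 2
        - Lqa La i δ.1 - Lqb Lb i δ.2 else 0)
  + (if j.1 = i.1 - 1 then Lqa La i δ.1 * Real.exp (-γ * δ.1) else 0)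
  + (if j.1 = i.1 + 1 then Lqb Lb i δ.2 * Real.exp (-γ * δ.2) else 0)

/-- The matrix exponential, entrywise via its power series. -/
def matExp {n : Type*} [Fintype n] [DecidableEq n] (M : Matrix n n ℝ) :
    Matrix n n ℝ := fun i j => ∑' k : ℕ, ((k.factorial : ℝ))⁻¹ * (M ^ k) i j

/-- The one-step certainty-equivalent score `C_h^δ φ (q)`. -/
def CE {Q : ℕ} (σ γ η : ℝ) (La Lb : ℝ → ℝ) (h : ℝ) (δ : ℝ × ℝ) (φ : Vec Q)
    (q : QI Q) : ℝ :=
  -(1 / γ) * Real.log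
    ((matExp (h • Kmat Q σ γ η La Lb δ)).mulVec (fun r => Real.exp (-γ * φ r)) q)

/-- The entropy-regularized CE-score Bellman operator `T_h^λ`. -/
def Top {Q : ℕ} (σ γ η : ℝ) (La Lb : ℝ → ℝ) (ν : Measure (ℝ × ℝ)) (h lam : ℝ)
    (φ : Vec Q) : Vec Q := fun q =>
  h * lam * Real.log (∫ δ, Real.exp (CE σ γ η La Lb h δ φ q / (h * lam)) ∂ν)

/-- The discrete CE-score values: `dval … k = v^{h,λ}_{N-k}`, i.e. `k` backward
steps from the terminal condition `v^{h,λ}_{N,q} = -Φ q²`. -/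
def dval {Q : ℕ} (σ γ η Φ : ℝ) (La Lb : ℝ → ℝ) (ν : Measure (ℝ × ℝ))
    (h lam : ℝ) : ℕ → Vec Q
  | 0 => fun q => -Φ * (q.1 : ℝ) ^ 2
  | k + 1 => Top σ γ η La Lb ν h lam (dval σ γ η Φ La Lb ν h lam k)

/-- The soft-HJB Euler iterates: `eulerVal … k = v̂^{h,λ}_{N-k}`. -/
def eulerVal {Q : ℕ} (σ γ η Φ : ℝ) (La Lb : ℝ → ℝ) (ν : Measure (ℝ × ℝ))
    (h lam : ℝ) : ℕ → Vec Q
  | 0 => fun q => -Φ * (q.1 : ℝ) ^ 2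
  | k + 1 => fun q =>
      eulerVal σ γ η Φ La Lb ν h lam k q
        + h * Hlam σ γ η La Lb ν lam (eulerVal σ γ η Φ La Lb ν h lam k) q

/-- The Gibbs probability measure with score `g` relative to `ν`. -/
def gibbs (ν : Measure (ℝ × ℝ)) (g : ℝ × ℝ → ℝ) : Measure (ℝ × ℝ) :=
  ν.withDensity fun δ => ENNReal.ofReal (Real.exp (g δ) / ∫ ζ, Real.exp (g ζ) ∂ν)

/-- The active projection `P_q`. -/
def Pq {Q : ℕ} (q : QI Q) (ξ : ℝ × ℝ) : ℝ × ℝ :=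
  (if -(Q : ℤ) < q.1 then ξ.1 else 0, if q.1 < (Q : ℤ) then ξ.2 else 0)

/-- Euclidean norm on `ℝ²`. -/
def enorm2 (ξ : ℝ × ℝ) : ℝ := Real.sqrt (ξ.1 ^ 2 + ξ.2 ^ 2)

/-- The optimal quote set `𝒜_q*` for the value vector `y`. -/
def argmaxSet {Q : ℕ} (σ γ η dlo dhi : ℝ) (La Lb : ℝ → ℝ) (y : Vec Q) (q : QI Q) :
    Set (ℝ × ℝ) :=
  {δ ∈ Aset dlo dhi | ∀ ζ ∈ Aset dlo dhi, Ham σ γ η La Lb y ζ q ≤ Ham σ γ η La Lb y δ q}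

/-- Active-coordinate distance to a set of quotes. -/
def distq {Q : ℕ} (q : QI Q) (δ : ℝ × ℝ) (S : Set (ℝ × ℝ)) : ℝ :=
  ⨅ d ∈ S, enorm2 (Pq q (δ - d))

/-- Kullback–Leibler divergence with the `+∞` convention. -/
def KLdiv (π ν : Measure (ℝ × ℝ)) : EReal :=
  if π ≪ ν ∧ Integrable
      (fun δ => ((π.rnDeriv ν δ).toReal) * Real.log ((π.rnDeriv ν δ).toReal)) ν
  then ((∫ δ, ((π.rnDeriv ν δ).toReal) * Real.log ((π.rnDeriv ν δ).toReal) ∂ν : ℝ) : EReal)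
  else ⊤

private lemma exp_lip {u v M : ℝ} (hu : u ≤ M) (hv : v ≤ M) :
    |Real.exp u - Real.exp v| ≤ Real.exp M * |u - v| := by
  wlog h : v ≤ u generalizing u v
  · rw [abs_sub_comm, abs_sub_comm u v]
    exact this hv hu (le_of_not_ge h)
  rw [abs_of_nonneg (sub_nonneg.mpr (Real.exp_le_exp.mpr h)),
    abs_of_nonneg (sub_nonneg.mpr h)]
  have h2 : Real.exp v = Real.exp u * Real.exp (v - u) := by
    rw [← Real.exp_add]; ring_nf
  have h3 := Real.add_one_le_exp (v - u)
  have h4 := Real.exp_le_exp.mpr hu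
  nlinarith [Real.exp_pos u, mul_le_mul_of_nonneg_left h3 (Real.exp_pos u).le,
    mul_le_mul_of_nonneg_right h4 (sub_nonneg.mpr h)]

private lemma lip_of_contDiffOn {f : ℝ → ℝ} {a b : ℝ} (hab : a < b)
    (hf : ContDiffOn ℝ 1 f (Set.Icc a b)) :
    ∃ K, 0 ≤ K ∧ ∀ x ∈ Set.Icc a b, ∀ y ∈ Set.Icc a b, |f x - f y| ≤ K * |x - y| := by
  have hu := uniqueDiffOn_Icc hab
  have hdc : ContinuousOn (derivWithin f (Set.Icc a b)) (Set.Icc a b) :=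
    hf.continuousOn_derivWithin hu le_rfl
  obtain ⟨K, hK⟩ := isCompact_Icc.exists_bound_of_continuousOn hdc
  have hK0 : 0 ≤ K := le_trans (norm_nonneg _) (hK a (Set.left_mem_Icc.mpr hab.le))
  refine ⟨K, hK0, fun x hx y hy => ?_⟩
  have := Convex.norm_image_sub_le_of_norm_derivWithin_le
    (hf.differentiableOn one_ne_zero) hK (convex_Icc a b) hy hx
  simpa [Real.norm_eq_abs] using this

private lemma term_ub {γ c Lbar E x : ℝ} (hγ : 0 < γ) (hc : 0 ≤ c) (hcL : c ≤ Lbar)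
    (hE : 0 ≤ E) : c / γ * (1 - Real.exp x) ≤ Lbar / γ * (1 + E) := by
  have h1 : (1 : ℝ) - Real.exp x ≤ 1 + E := by nlinarith [Real.exp_pos x]
  have h2 : 0 ≤ c / γ := div_nonneg hc hγ.le
  calc c / γ * (1 - Real.exp x) ≤ c / γ * (1 + E) := by nlinarith
    _ ≤ Lbar / γ * (1 + E) :=
      mul_le_mul_of_nonneg_right ((div_le_div_iff_of_pos_right hγ).mpr hcL) (by linarith)

private lemma term_lip {γ Lbar Ka E D : ℝ} {La : ℝ → ℝ} {a b t : ℝ}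
    (hγ : 0 < γ) (hKa0 : 0 ≤ Ka) (hLbar : 0 ≤ Lbar) (hLb0 : 0 ≤ La b) (hLbL : La b ≤ Lbar)
    (hlip : |La a - La b| ≤ Ka * |a - b|)
    (hat : |a + t| ≤ D) (hbt : |b + t| ≤ D) (hE : E = Real.exp (γ * D)) :
    |La a / γ * (1 - Real.exp (-γ * (a + t))) - La b / γ * (1 - Real.exp (-γ * (b + t)))|
      ≤ (Ka / γ * (1 + E) + Lbar * E) * |a - b| := by
  have hE0 : 0 < E := hE ▸ Real.exp_pos _
  have h1 : -γ * (a + t) ≤ γ * D := by nlinarith [abs_le.mp hat]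
  have h2 : -γ * (b + t) ≤ γ * D := by nlinarith [abs_le.mp hbt]
  have habs1 : |1 - Real.exp (-γ * (a + t))| ≤ 1 + E := by
    have h0 := (Real.exp_pos (-γ * (a + t))).le
    have h0' : Real.exp (-γ * (a + t)) ≤ E := by rw [hE]; exact Real.exp_le_exp.mpr h1
    rw [abs_le]; constructor <;> nlinarith
  have hexp : |Real.exp (-γ * (b + t)) - Real.exp (-γ * (a + t))| ≤ E * (γ * |a - b|) := by
    have h3 := exp_lip h2 h1
    have h4 : |(-γ * (b + t)) - (-γ * (a + t))| = γ * |a - b| := by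
      rw [show (-γ * (b + t)) - (-γ * (a + t)) = γ * (a - b) by ring, abs_mul,
        abs_of_pos hγ]
    rw [h4] at h3
    rw [hE]
    exact h3
  have key : La a / γ * (1 - Real.exp (-γ * (a + t)))
      - La b / γ * (1 - Real.exp (-γ * (b + t)))
      = (La a - La b) / γ * (1 - Real.exp (-γ * (a + t)))
        + La b / γ * (Real.exp (-γ * (b + t)) - Real.exp (-γ * (a + t))) := by ring
  rw [key]
  calc |(La a - La b) / γ * (1 - Real.exp (-γ * (a + t)))
        + La b / γ * (Real.exp (-γ * (b + t)) - Real.exp (-γ * (a + t)))|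
      ≤ |(La a - La b) / γ * (1 - Real.exp (-γ * (a + t)))|
        + |La b / γ * (Real.exp (-γ * (b + t)) - Real.exp (-γ * (a + t)))| := abs_add_le _ _
    _ = |La a - La b| / γ * |1 - Real.exp (-γ * (a + t))|
        + La b / γ * |Real.exp (-γ * (b + t)) - Real.exp (-γ * (a + t))| := by
        rw [abs_mul, abs_mul, abs_div, abs_div, abs_of_pos hγ, abs_of_nonneg hLb0]
    _ ≤ (Ka * |a - b|) / γ * (1 + E) + Lbar / γ * (E * (γ * |a - b|)) := by
        gcongr
    _ = (Ka / γ * (1 + E) + Lbar * E) * |a - b| := by field_simp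

set_option maxHeartbeats 1000000 in
/-- entropy bias. -/
theorem entropy_bias
    (T : ℝ) (Q : ℕ) (σ γ Φ η dlo dhi Lbar mlo mhi : ℝ)
    (La Lb : ℝ → ℝ) (ν : Measure (ℝ × ℝ)) (m : ℝ × ℝ → ℝ)
    (hT : 0 < T) (hσ : 0 < σ) (hγ : 0 < γ) (hΦ : 0 ≤ Φ) (hη : 0 ≤ η) (hd : dlo < dhi)
    (hLa : ContDiffOn ℝ 1 La (Set.Icc dlo dhi)) (hLb : ContDiffOn ℝ 1 Lb (Set.Icc dlo dhi))
    (hLa_bd : ∀ x ∈ Set.Icc dlo dhi, 0 ≤ La x ∧ La x ≤ Lbar)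
    (hLb_bd : ∀ x ∈ Set.Icc dlo dhi, 0 ≤ Lb x ∧ Lb x ≤ Lbar)
    (hm : Measurable m) (hmlo : 0 < mlo) (hmhi : mlo ≤ mhi)
    (hm_bd : ∀ᵐ δ ∂(volume.restrict (Aset dlo dhi)), mlo ≤ m δ ∧ m δ ≤ mhi)
    (hν : ν = (volume.restrict (Aset dlo dhi)).withDensity fun δ => ENNReal.ofReal (m δ))
    (hνprob : IsProbabilityMeasure ν)
    (B : ℝ) (hB : 0 < B) :
    ∃ C > (0 : ℝ),
      ∀ lam : ℝ, 0 < lam → lam ≤ 1 →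
        ∀ y : Vec Q, (∀ q : QI Q, |y q| ≤ B) →
          ∀ q : QI Q,
            0 ≤ H0 σ γ η dlo dhi La Lb y q - Hlam σ γ η La Lb ν lam y q ∧
            H0 σ γ η dlo dhi La Lb y q - Hlam σ γ η La Lb ν lam y q
              ≤ C * lam * (1 + |Real.log lam|) := by
  classical
  have hdle : dlo ≤ dhi := hd.le
  have hAmeas : MeasurableSet (Aset dlo dhi) := measurableSet_Icc.prod measurableSet_Icc
  have hdlo_mem : dlo ∈ Set.Icc dlo dhi := Set.left_mem_Icc.mpr hdle
  have hLbar0 : 0 ≤ Lbar := le_trans (hLa_bd dlo hdlo_mem).1 (hLa_bd dlo hdlo_mem).2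
  obtain ⟨Ka, hKa0, hKa⟩ := lip_of_contDiffOn hd hLa
  obtain ⟨Kb, hKb0, hKb⟩ := lip_of_contDiffOn hd hLb
  obtain ⟨D, hD⟩ : ∃ x : ℝ, x = max |dlo| |dhi| + 2 * B := ⟨_, rfl⟩
  have hD0 : 0 < D := by
    have h1 := abs_nonneg dlo
    have h2 := le_max_left |dlo| |dhi|
    rw [hD]; nlinarith
  obtain ⟨E, hE⟩ : ∃ x : ℝ, x = Real.exp (γ * D) := ⟨_, rfl⟩
  have hE0 : 0 < E := by rw [hE]; exact Real.exp_pos _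
  obtain ⟨K, hKdef⟩ : ∃ x : ℝ, x = max Ka Kb := ⟨_, rfl⟩
  have hK0 : 0 ≤ K := by rw [hKdef]; exact le_trans hKa0 (le_max_left _ _)
  obtain ⟨L, hL⟩ : ∃ x : ℝ, x = K / γ * (1 + E) + Lbar * E := ⟨_, rfl⟩
  have hL0 : 0 ≤ L := by
    have h1 : 0 ≤ K / γ := div_nonneg hK0 hγ.le
    have h2 : 0 ≤ K / γ * (1 + E) := mul_nonneg h1 (by linarith)
    have h3 : 0 ≤ Lbar * E := mul_nonneg hLbar0 hE0.le
    rw [hL]; linarith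
  obtain ⟨M, hM⟩ : ∃ x : ℝ, x = 2 * (Lbar / γ) * (1 + E) := ⟨_, rfl⟩
  have habsI : ∀ x ∈ Set.Icc dlo dhi, |x| ≤ max |dlo| |dhi| := by
    intro x hx
    rw [abs_le]
    refine ⟨?_, ?_⟩
    · have h1 := neg_abs_le dlo
      have h2 := le_max_left |dlo| |dhi|
      linarith [hx.1]
    · have h1 := le_abs_self dhi
      have h2 := le_max_right |dlo| |dhi|
      linarith [hx.2]
  have hext : ∀ (y : Vec Q), (∀ q, |y q| ≤ B) → ∀ z : ℤ, |ext y z| ≤ B := by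
    intro y hy z
    unfold ext
    split
    · exact hy _
    · simpa using hB.le
  have hDelA : ∀ (y : Vec Q), (∀ q, |y q| ≤ B) → ∀ (q : QI Q) (δ : ℝ × ℝ),
      δ ∈ Aset dlo dhi → |DelA y δ q| ≤ D := by
    intro y hy q δ hδ
    unfold DelA
    split
    · have h1 := habsI δ.1 hδ.1
      have h2 := hext y hy (q.1 - 1)
      have h3 := hy q
      have h4 : |δ.1 + ext y (q.1 - 1) - y q| ≤ |δ.1| + |ext y (q.1 - 1)| + |y q| := by
        rw [sub_eq_add_neg]
        refine (abs_add_three _ _ _).trans ?_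
        simp [abs_neg]
      rw [hD]; linarith
    · simpa using hD0.le
  have hDelB : ∀ (y : Vec Q), (∀ q, |y q| ≤ B) → ∀ (q : QI Q) (δ : ℝ × ℝ),
      δ ∈ Aset dlo dhi → |DelB y δ q| ≤ D := by
    intro y hy q δ hδ
    unfold DelB
    split
    · have h1 := habsI δ.2 hδ.2
      have h2 := hext y hy (q.1 + 1)
      have h3 := hy q
      have h4 : |δ.2 + ext y (q.1 + 1) - y q| ≤ |δ.2| + |ext y (q.1 + 1)| + |y q| := by
        rw [sub_eq_add_neg]
        refine (abs_add_three _ _ _).trans ?_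
        simp [abs_neg]
      rw [hD]; linarith
    · simpa using hD0.le
  have hLqa_bd : ∀ (q : QI Q) (x : ℝ), x ∈ Set.Icc dlo dhi →
      0 ≤ Lqa La q x ∧ Lqa La q x ≤ Lbar := by
    intro q x hx
    unfold Lqa
    split
    · exact hLa_bd x hx
    · exact ⟨le_refl 0, hLbar0⟩
  have hLqb_bd : ∀ (q : QI Q) (x : ℝ), x ∈ Set.Icc dlo dhi →
      0 ≤ Lqb Lb q x ∧ Lqb Lb q x ≤ Lbar := by
    intro q x hx
    unfold Lqb
    split
    · exact hLb_bd x hx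
    · exact ⟨le_refl 0, hLbar0⟩
  have hHamUB : ∀ (y : Vec Q) (q : QI Q) (δ : ℝ × ℝ), δ ∈ Aset dlo dhi →
      Ham σ γ η La Lb y δ q ≤ M := by
    intro y q δ hδ
    have h1 := hLqa_bd q δ.1 hδ.1
    have h2 := hLqb_bd q δ.2 hδ.2
    have t1 := term_ub (x := -γ * DelA y δ q) hγ h1.1 h1.2 hE0.le
    have t2 := term_ub (x := -γ * DelB y δ q) hγ h2.1 h2.2 hE0.le
    have hq2 : -η * (q.1 : ℝ) ^ 2 - γ * σ ^ 2 / 2 * (q.1 : ℝ) ^ 2 ≤ 0 := by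
      have h3 : 0 ≤ η * (q.1 : ℝ) ^ 2 := mul_nonneg hη (sq_nonneg _)
      have h4 : 0 ≤ γ * σ ^ 2 * (q.1 : ℝ) ^ 2 :=
        mul_nonneg (mul_nonneg hγ.le (sq_nonneg _)) (sq_nonneg _)
      nlinarith
    unfold Ham
    rw [hM]
    linarith
  have hHamLip : ∀ (y : Vec Q), (∀ q, |y q| ≤ B) → ∀ (q : QI Q) (δ ζ : ℝ × ℝ),
      δ ∈ Aset dlo dhi → ζ ∈ Aset dlo dhi →
      |Ham σ γ η La Lb y δ q - Ham σ γ η La Lb y ζ q|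
        ≤ L * (|δ.1 - ζ.1| + |δ.2 - ζ.2|) := by
    intro y hy q δ ζ hδ hζ
    have hta : |Lqa La q δ.1 / γ * (1 - Real.exp (-γ * DelA y δ q))
        - Lqa La q ζ.1 / γ * (1 - Real.exp (-γ * DelA y ζ q))| ≤ L * |δ.1 - ζ.1| := by
      by_cases hq : -(Q : ℤ) < q.1
      · have e1 : DelA y δ q = δ.1 + (ext y (q.1 - 1) - y q) := by
          unfold DelA; rw [if_pos hq, add_sub_assoc]
        have e2 : DelA y ζ q = ζ.1 + (ext y (q.1 - 1) - y q) := by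
          unfold DelA; rw [if_pos hq, add_sub_assoc]
        have e3 : ∀ x, Lqa La q x = La x := fun x => by unfold Lqa; rw [if_pos hq]
        have hat : |δ.1 + (ext y (q.1 - 1) - y q)| ≤ D := by
          rw [← e1]; exact hDelA y hy q δ hδ
        have hbt : |ζ.1 + (ext y (q.1 - 1) - y q)| ≤ D := by
          rw [← e2]; exact hDelA y hy q ζ hζ
        have hlip1 : |La δ.1 - La ζ.1| ≤ Ka * |δ.1 - ζ.1| := hKa δ.1 hδ.1 ζ.1 hζ.1
        have hmain := term_lip hγ hKa0 hLbar0 (hLa_bd ζ.1 hζ.1).1 (hLa_bd ζ.1 hζ.1).2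
          hlip1 hat hbt hE
        rw [e1, e2, e3, e3]
        refine hmain.trans ?_
        have hKK : Ka / γ ≤ K / γ := by
          rw [hKdef]; exact (div_le_div_iff_of_pos_right hγ).mpr (le_max_left _ _)
        have hLe : Ka / γ * (1 + E) + Lbar * E ≤ L := by
          rw [hL]
          nlinarith [mul_le_mul_of_nonneg_right hKK (by linarith : (0:ℝ) ≤ 1 + E)]
        exact mul_le_mul_of_nonneg_right hLe (abs_nonneg _)
      · unfold Lqa
        simp only [if_neg hq]
        simpa using mul_nonneg hL0 (abs_nonneg (δ.1 - ζ.1))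
    have htb : |Lqb Lb q δ.2 / γ * (1 - Real.exp (-γ * DelB y δ q))
        - Lqb Lb q ζ.2 / γ * (1 - Real.exp (-γ * DelB y ζ q))| ≤ L * |δ.2 - ζ.2| := by
      by_cases hq : q.1 < (Q : ℤ)
      · have e1 : DelB y δ q = δ.2 + (ext y (q.1 + 1) - y q) := by
          unfold DelB; rw [if_pos hq, add_sub_assoc]
        have e2 : DelB y ζ q = ζ.2 + (ext y (q.1 + 1) - y q) := by
          unfold DelB; rw [if_pos hq, add_sub_assoc]
        have e3 : ∀ x, Lqb Lb q x = Lb x := fun x => by unfold Lqb; rw [if_pos hq]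
        have hat : |δ.2 + (ext y (q.1 + 1) - y q)| ≤ D := by
          rw [← e1]; exact hDelB y hy q δ hδ
        have hbt : |ζ.2 + (ext y (q.1 + 1) - y q)| ≤ D := by
          rw [← e2]; exact hDelB y hy q ζ hζ
        have hlip1 : |Lb δ.2 - Lb ζ.2| ≤ Kb * |δ.2 - ζ.2| := hKb δ.2 hδ.2 ζ.2 hζ.2
        have hmain := term_lip hγ hKb0 hLbar0 (hLb_bd ζ.2 hζ.2).1 (hLb_bd ζ.2 hζ.2).2
          hlip1 hat hbt hE
        rw [e1, e2, e3, e3]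
        refine hmain.trans ?_
        have hKK : Kb / γ ≤ K / γ := by
          rw [hKdef]; exact (div_le_div_iff_of_pos_right hγ).mpr (le_max_right _ _)
        have hLe : Kb / γ * (1 + E) + Lbar * E ≤ L := by
          rw [hL]
          nlinarith [mul_le_mul_of_nonneg_right hKK (by linarith : (0:ℝ) ≤ 1 + E)]
        exact mul_le_mul_of_nonneg_right hLe (abs_nonneg _)
      · unfold Lqb
        simp only [if_neg hq]
        simpa using mul_nonneg hL0 (abs_nonneg (δ.2 - ζ.2))
    have hsplit : Ham σ γ η La Lb y δ q - Ham σ γ η La Lb y ζ q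
        = (Lqa La q δ.1 / γ * (1 - Real.exp (-γ * DelA y δ q))
            - Lqa La q ζ.1 / γ * (1 - Real.exp (-γ * DelA y ζ q)))
          + (Lqb Lb q δ.2 / γ * (1 - Real.exp (-γ * DelB y δ q))
            - Lqb Lb q ζ.2 / γ * (1 - Real.exp (-γ * DelB y ζ q))) := by
      unfold Ham; ring
    calc |Ham σ γ η La Lb y δ q - Ham σ γ η La Lb y ζ q|
        ≤ |Lqa La q δ.1 / γ * (1 - Real.exp (-γ * DelA y δ q))
            - Lqa La q ζ.1 / γ * (1 - Real.exp (-γ * DelA y ζ q))|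
          + |Lqb Lb q δ.2 / γ * (1 - Real.exp (-γ * DelB y δ q))
            - Lqb Lb q ζ.2 / γ * (1 - Real.exp (-γ * DelB y ζ q))| := by
          rw [hsplit]; exact abs_add_le _ _
      _ ≤ L * |δ.1 - ζ.1| + L * |δ.2 - ζ.2| := add_le_add hta htb
      _ = L * (|δ.1 - ζ.1| + |δ.2 - ζ.2|) := by ring
  have hHamCont : ∀ (y : Vec Q) (q : QI Q),
      ContinuousOn (fun δ : ℝ × ℝ => Ham σ γ η La Lb y δ q) (Aset dlo dhi) := by
    intro y q
    have hfst : ContinuousOn (fun δ : ℝ × ℝ => La δ.1) (Aset dlo dhi) :=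
      hLa.continuousOn.comp continuous_fst.continuousOn (fun δ hδ => hδ.1)
    have hsnd : ContinuousOn (fun δ : ℝ × ℝ => Lb δ.2) (Aset dlo dhi) :=
      hLb.continuousOn.comp continuous_snd.continuousOn (fun δ hδ => hδ.2)
    have cA : Continuous (fun δ : ℝ × ℝ =>
        Real.exp (-γ * (δ.1 + ext y (q.1 - 1) - y q))) := by fun_prop
    have cB : Continuous (fun δ : ℝ × ℝ =>
        Real.exp (-γ * (δ.2 + ext y (q.1 + 1) - y q))) := by fun_prop
    have htermA : ContinuousOn (fun δ : ℝ × ℝ =>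
        La δ.1 / γ * (1 - Real.exp (-γ * (δ.1 + ext y (q.1 - 1) - y q)))) (Aset dlo dhi) :=
      (hfst.div_const γ).mul (continuous_const.sub cA).continuousOn
    have htermB : ContinuousOn (fun δ : ℝ × ℝ =>
        Lb δ.2 / γ * (1 - Real.exp (-γ * (δ.2 + ext y (q.1 + 1) - y q)))) (Aset dlo dhi) :=
      (hsnd.div_const γ).mul (continuous_const.sub cB).continuousOn
    unfold Ham Lqa Lqb DelA DelB
    by_cases h1 : -(Q : ℤ) < q.1 <;> by_cases h2 : q.1 < (Q : ℤ) <;>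
      simp only [h1, h2, if_true, if_false, if_pos, if_neg, not_false_iff]
    · exact (continuousOn_const.add htermA).add htermB
    · exact (continuousOn_const.add htermA).add continuousOn_const
    · exact (continuousOn_const.add continuousOn_const).add htermB
    · exact continuousOn_const
  -- the structural constant
  refine ⟨(1 + 2 * L * (dhi - dlo) + |Real.log mlo| + 2 * |Real.log (dhi - dlo)|) + 2,
    by linarith [abs_nonneg (Real.log mlo), abs_nonneg (Real.log (dhi - dlo)),
      mul_nonneg hL0 (sub_nonneg.mpr hdle)], ?_⟩
  intro lam hlam hlam1 y hy q
  set f : ℝ × ℝ → ℝ := fun δ => Real.exp (Ham σ γ η La Lb y δ q / lam) with hf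
  have hac : ν ≪ volume.restrict (Aset dlo dhi) := by
    rw [hν]; exact withDensity_absolutelyContinuous _ _
  have hAae : ∀ᵐ δ ∂ν, δ ∈ Aset dlo dhi :=
    Filter.Eventually.filter_mono hac.ae_le (ae_restrict_mem hAmeas)
  have hcont : ContinuousOn f (Aset dlo dhi) :=
    Real.continuous_exp.comp_continuousOn ((hHamCont y q).div_const lam)
  have hfm : AEStronglyMeasurable f ν :=
    (hcont.aestronglyMeasurable hAmeas).mono_ac hac
  have hfub : ∀ᵐ δ ∂ν, ‖f δ‖ ≤ Real.exp (M / lam) := by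
    filter_upwards [hAae] with δ hδ
    rw [Real.norm_eq_abs, abs_of_pos (Real.exp_pos _)]
    exact Real.exp_le_exp.mpr ((div_le_div_iff_of_pos_right hlam).mpr (hHamUB y q δ hδ))
  have hfint : Integrable f ν := Integrable.mono' (integrable_const _) hfm hfub
  have hbdd : BddAbove (Set.range fun δ : Aset dlo dhi => Ham σ γ η La Lb y δ.1 q) := by
    refine ⟨M, ?_⟩
    rintro x ⟨δ, rfl⟩
    exact hHamUB y q δ.1 δ.2
  haveI hne : Nonempty (Aset dlo dhi) :=
    ⟨⟨(dlo, dlo), Set.mem_prod.mpr ⟨hdlo_mem, hdlo_mem⟩⟩⟩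
  have hle : ∀ δ ∈ Aset dlo dhi, Ham σ γ η La Lb y δ q ≤ H0 σ γ η dlo dhi La Lb y q :=
    fun δ hδ => le_ciSup hbdd (⟨δ, hδ⟩ : Aset dlo dhi)
  obtain ⟨δs, hδs⟩ :
      ∃ δ : Aset dlo dhi, H0 σ γ η dlo dhi La Lb y q - lam < Ham σ γ η La Lb y δ.1 q := by
    apply exists_lt_of_lt_ciSup
    have : (0:ℝ) < lam := hlam
    unfold H0
    linarith [sub_lt_self (⨆ δ : Aset dlo dhi, Ham σ γ η La Lb y δ.1 q) this]
  have hδsA : δs.1 ∈ Aset dlo dhi := δs.2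
  obtain ⟨r, hr⟩ : ∃ x : ℝ, x = lam * (dhi - dlo) := ⟨_, rfl⟩
  have hr0 : 0 < r := by rw [hr]; exact mul_pos hlam (sub_pos.mpr hd)
  have hrle : r ≤ dhi - dlo := by rw [hr]; nlinarith [sub_pos.mpr hd]
  obtain ⟨a1, ha1⟩ : ∃ x : ℝ, x = min δs.1.1 (dhi - r) := ⟨_, rfl⟩
  obtain ⟨b1, hb1⟩ : ∃ x : ℝ, x = min δs.1.2 (dhi - r) := ⟨_, rfl⟩
  set S : Set (ℝ × ℝ) := Set.Icc a1 (a1 + r) ×ˢ Set.Icc b1 (b1 + r) with hS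
  have hδs1 : δs.1.1 ∈ Set.Icc dlo dhi := hδsA.1
  have hδs2 : δs.1.2 ∈ Set.Icc dlo dhi := hδsA.2
  have hsub1 : Set.Icc a1 (a1 + r) ⊆ Set.Icc dlo dhi := by
    apply Set.Icc_subset_Icc
    · rw [ha1]; exact le_min hδs1.1 (by linarith)
    · rw [ha1]; linarith [min_le_right δs.1.1 (dhi - r)]
  have hsub2 : Set.Icc b1 (b1 + r) ⊆ Set.Icc dlo dhi := by
    apply Set.Icc_subset_Icc
    · rw [hb1]; exact le_min hδs2.1 (by linarith)
    · rw [hb1]; linarith [min_le_right δs.1.2 (dhi - r)]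
  have hclose1 : ∀ x ∈ Set.Icc a1 (a1 + r), |x - δs.1.1| ≤ r := by
    intro x hx
    have h1 : a1 ≤ δs.1.1 := by rw [ha1]; exact min_le_left _ _
    have h2 : δs.1.1 - r ≤ a1 := by
      rw [ha1]; exact le_min (by linarith) (by linarith [hδs1.2])
    rw [abs_le]
    constructor <;> [linarith [hx.1]; linarith [hx.2]]
  have hclose2 : ∀ x ∈ Set.Icc b1 (b1 + r), |x - δs.1.2| ≤ r := by
    intro x hx
    have h1 : b1 ≤ δs.1.2 := by rw [hb1]; exact min_le_left _ _
    have h2 : δs.1.2 - r ≤ b1 := by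
      rw [hb1]; exact le_min (by linarith) (by linarith [hδs2.2])
    rw [abs_le]
    constructor <;> [linarith [hx.1]; linarith [hx.2]]
  have hSmeas : MeasurableSet S := measurableSet_Icc.prod measurableSet_Icc
  have hSsub : S ⊆ Aset dlo dhi := Set.prod_mono hsub1 hsub2
  have hvolS : volume S = ENNReal.ofReal r * ENNReal.ofReal r := by
    rw [hS, Measure.volume_eq_prod, Measure.prod_prod, Real.volume_Icc, Real.volume_Icc,
      add_sub_cancel_left, add_sub_cancel_left]
  have hνS : ENNReal.ofReal (mlo * r ^ 2) ≤ ν S := by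
    rw [hν, withDensity_apply _ hSmeas, Measure.restrict_restrict hSmeas,
      Set.inter_eq_left.mpr hSsub]
    have hmono : ∀ᵐ x ∂(volume.restrict S), ENNReal.ofReal mlo ≤ ENNReal.ofReal (m x) := by
      filter_upwards [ae_restrict_of_ae_restrict_of_subset hSsub hm_bd] with x hx
      exact ENNReal.ofReal_le_ofReal hx.1
    calc ENNReal.ofReal (mlo * r ^ 2) = ENNReal.ofReal mlo * volume S := by
          rw [hvolS, pow_two, ← ENNReal.ofReal_mul hr0.le, ← ENNReal.ofReal_mul hmlo.le]
      _ = ∫⁻ _ in S, ENNReal.ofReal mlo ∂volume := by rw [setLIntegral_const]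
      _ ≤ ∫⁻ x in S, ENNReal.ofReal (m x) ∂volume := lintegral_mono_ae hmono
  obtain ⟨c, hc⟩ : ∃ x : ℝ,
      x = Real.exp ((H0 σ γ η dlo dhi La Lb y q - lam - 2 * L * r) / lam) := ⟨_, rfl⟩
  have hc0 : 0 < c := by rw [hc]; exact Real.exp_pos _
  have hlowS : ∀ δ ∈ S, c ≤ f δ := by
    intro δ hδ
    have hδA := hSsub hδ
    have hham := hHamLip y hy q δ δs.1 hδA hδsA
    have h1 : |δ.1 - δs.1.1| ≤ r := hclose1 δ.1 hδ.1
    have h2 : |δ.2 - δs.1.2| ≤ r := hclose2 δ.2 hδ.2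
    have habs2 := abs_le.mp hham
    have h3 : H0 σ γ η dlo dhi La Lb y q - lam - 2 * L * r ≤ Ham σ γ η La Lb y δ q := by
      have h5 : L * (|δ.1 - δs.1.1| + |δ.2 - δs.1.2|) ≤ L * (r + r) :=
        mul_le_mul_of_nonneg_left (by linarith) hL0
      linarith [habs2.1, hδs]
    rw [hc]
    exact Real.exp_le_exp.mpr ((div_le_div_iff_of_pos_right hlam).mpr h3)
  have hI_lb : c * (mlo * r ^ 2) ≤ ∫ δ, f δ ∂ν := by
    have h1 : ∫ δ in S, c ∂ν ≤ ∫ δ in S, f δ ∂ν :=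
      setIntegral_mono_on (integrableOn_const (measure_ne_top ν S))
        hfint.integrableOn hSmeas hlowS
    have h2 : ∫ δ in S, f δ ∂ν ≤ ∫ δ, f δ ∂ν :=
      setIntegral_le_integral hfint (Filter.Eventually.of_forall fun δ => (Real.exp_pos _).le)
    have h3 : ∫ _ in S, c ∂ν = (ν S).toReal * c := by
      rw [setIntegral_const]; simp [smul_eq_mul, measureReal_def]
    have h4 : mlo * r ^ 2 ≤ (ν S).toReal := by
      have h5 := ENNReal.toReal_mono (measure_ne_top ν S) hνS
      rwa [ENNReal.toReal_ofReal (mul_nonneg hmlo.le (pow_nonneg hr0.le 2))] at h5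
    have h6 : c * (mlo * r ^ 2) ≤ (ν S).toReal * c := by
      have := mul_le_mul_of_nonneg_right h4 hc0.le
      linarith
    have h7 : (ν S).toReal * c ≤ ∫ δ in S, f δ ∂ν := h3 ▸ h1
    linarith
  have hIpos : (0:ℝ) < ∫ δ, f δ ∂ν :=
    lt_of_lt_of_le (mul_pos hc0 (mul_pos hmlo (pow_pos hr0 2))) hI_lb
  have hI_ub : ∫ δ, f δ ∂ν ≤ Real.exp (H0 σ γ η dlo dhi La Lb y q / lam) := by
    have h1 : ∀ᵐ δ ∂ν, f δ ≤ Real.exp (H0 σ γ η dlo dhi La Lb y q / lam) := by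
      filter_upwards [hAae] with δ hδ
      exact Real.exp_le_exp.mpr ((div_le_div_iff_of_pos_right hlam).mpr (hle δ hδ))
    calc ∫ δ, f δ ∂ν ≤ ∫ _, Real.exp (H0 σ γ η dlo dhi La Lb y q / lam) ∂ν :=
          integral_mono_ae hfint (integrable_const _) h1
      _ = Real.exp (H0 σ γ η dlo dhi La Lb y q / lam) := by simp
  have hHlam_eq : Hlam σ γ η La Lb ν lam y q = lam * Real.log (∫ δ, f δ ∂ν) := rfl
  constructor
  · rw [hHlam_eq]
    have h1 : Real.log (∫ δ, f δ ∂ν) ≤ H0 σ γ η dlo dhi La Lb y q / lam := by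
      have := Real.log_le_log hIpos hI_ub
      rwa [Real.log_exp] at this
    have h2 : lam * Real.log (∫ δ, f δ ∂ν) ≤ lam * (H0 σ γ η dlo dhi La Lb y q / lam) :=
      mul_le_mul_of_nonneg_left h1 hlam.le
    have h3 : lam * (H0 σ γ η dlo dhi La Lb y q / lam) = H0 σ γ η dlo dhi La Lb y q := by
      field_simp
    linarith
  · rw [hHlam_eq]
    have hlog1 : Real.log (c * (mlo * r ^ 2)) ≤ Real.log (∫ δ, f δ ∂ν) :=
      Real.log_le_log (mul_pos hc0 (mul_pos hmlo (pow_pos hr0 2))) hI_lb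
    have hexpand : Real.log (c * (mlo * r ^ 2))
        = (H0 σ γ η dlo dhi La Lb y q - lam - 2 * L * r) / lam
          + (Real.log mlo + 2 * Real.log r) := by
      rw [Real.log_mul (ne_of_gt hc0) (ne_of_gt (mul_pos hmlo (pow_pos hr0 2))),
        Real.log_mul (ne_of_gt hmlo) (ne_of_gt (pow_pos hr0 2)), hc, Real.log_exp,
        Real.log_pow]
      push_cast
      ring
    have h5 : lam * ((H0 σ γ η dlo dhi La Lb y q - lam - 2 * L * r) / lam
          + (Real.log mlo + 2 * Real.log r)) ≤ lam * Real.log (∫ δ, f δ ∂ν) := by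
      apply mul_le_mul_of_nonneg_left _ hlam.le
      rw [← hexpand]
      exact hlog1
    have h6 : lam * ((H0 σ γ η dlo dhi La Lb y q - lam - 2 * L * r) / lam
          + (Real.log mlo + 2 * Real.log r))
        = H0 σ γ η dlo dhi La Lb y q - lam - 2 * L * r
          + lam * Real.log mlo + 2 * lam * Real.log r := by
      field_simp
      ring
    have h7 : Real.log r = Real.log lam + Real.log (dhi - dlo) := by
      rw [hr]; exact Real.log_mul (ne_of_gt hlam) (ne_of_gt (sub_pos.mpr hd))
    have p1 : lam * (-Real.log mlo) ≤ lam * |Real.log mlo| :=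
      mul_le_mul_of_nonneg_left (neg_le_abs _) hlam.le
    have p2 : lam * (-Real.log (dhi - dlo)) ≤ lam * |Real.log (dhi - dlo)| :=
      mul_le_mul_of_nonneg_left (neg_le_abs _) hlam.le
    have p3 : lam * (-Real.log lam) ≤ lam * |Real.log lam| :=
      mul_le_mul_of_nonneg_left (neg_le_abs _) hlam.le
    have p4 : 0 ≤ lam * |Real.log lam| := mul_nonneg hlam.le (abs_nonneg _)
    have p5 : 0 ≤ (1 + 2 * L * (dhi - dlo) + |Real.log mlo| + 2 * |Real.log (dhi - dlo)|)
        * (lam * |Real.log lam|) := by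
      apply mul_nonneg _ p4
      linarith [abs_nonneg (Real.log mlo), abs_nonneg (Real.log (dhi - dlo)),
        mul_nonneg hL0 (sub_nonneg.mpr hdle)]
    have key : H0 σ γ η dlo dhi La Lb y q - lam * Real.log (∫ δ, f δ ∂ν)
        ≤ lam + 2 * L * r - lam * Real.log mlo - 2 * lam * Real.log r := by
      linarith [h6 ▸ h5]
    rw [h7, hr] at key
    linarith [key, p1, p2, p3, p4, p5]


end MM
end
end

section
/- (One-step risk-sensitive consistency.) Fix B>0. There exist h₀>0 and a structural constant C<∞ (also depending on B) such that for every 0<h≤h₀: (i) sup over all φ∈ℝ^{2Q+1} with ‖φ‖_∞≤B, all q∈𝒬 and all δ∈A of |C_h^δφ(q) − φ_q − h·H_q(φ,δ)| ≤ Ch²; and consequently (ii) for every 0<λ≤1 and every φ with ‖φ‖_∞≤B, ‖T_h^λφ − (φ + h·H^λ(φ))‖_∞ ≤ Ch². -/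
open MeasureTheory
open scoped Classical

noncomputable section

namespace MM

lemma log_taylor {t : ℝ} (ht : |t| ≤ 1/2) : |Real.log (1+t) - t| ≤ 2 * t^2 := by
  have h1 : |(-t)| < 1 := by rw [abs_neg]; linarith [ht]
  have h := Real.abs_log_sub_add_sum_range_le h1 1
  simp [Finset.sum_range_one] at h
  rw [neg_add_eq_sub] at h
  calc |Real.log (1+t) - t| = |Real.log (1+t) - t| := rfl
    _ ≤ t^2 / (1 - |t|) := h
    _ ≤ t^2 / (1/2) := by
        apply div_le_div_of_nonneg_left (sq_nonneg t) (by norm_num) (by linarith)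
    _ = 2 * t^2 := by ring

lemma pow_entry_bound {n : Type*} [Fintype n] [DecidableEq n] (M : Matrix n n ℝ) (c : ℝ)
    (hc : 0 ≤ c) (hbd : ∀ i j, |M i j| ≤ c) :
    ∀ (k : ℕ) (i j : n), |(M ^ k) i j| ≤ ((Fintype.card n : ℝ) * c) ^ k := by
  intro k
  induction k with
  | zero =>
    intro i j
    simp [Matrix.one_apply]
    split_ifs <;> simp
  | succ k ih =>
    intro i j
    rw [pow_succ]
    have : (M ^ k * M) i j = ∑ l, (M ^ k) i l * M l j := rfl
    rw [this]
    calc |∑ l, (M ^ k) i l * M l j| ≤ ∑ l, |(M ^ k) i l * M l j| := Finset.abs_sum_le_sum_abs _ _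
      _ ≤ ∑ _l : n, ((Fintype.card n : ℝ) * c) ^ k * c := by
          apply Finset.sum_le_sum
          intro l _
          rw [abs_mul]
          exact mul_le_mul (ih i l) (hbd l j) (abs_nonneg _) (by positivity)
      _ = (Fintype.card n : ℝ) * (((Fintype.card n : ℝ) * c) ^ k * c) := by
          rw [Finset.sum_const, Finset.card_univ, nsmul_eq_mul]
      _ = ((Fintype.card n : ℝ) * c) ^ (k + 1) := by ring

lemma Kmul {Q : ℕ} {σ γ η : ℝ} {La Lb : ℝ → ℝ} (hγ : γ ≠ 0) (δ : ℝ × ℝ) (φ : Vec Q)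
    (i : QI Q) :
    (Kmat Q σ γ η La Lb δ).mulVec (fun r => Real.exp (-γ * φ r)) i
      = -γ * Ham σ γ η La Lb φ δ i * Real.exp (-γ * φ i) := by
  set u : Vec Q := fun r => Real.exp (-γ * φ r) with hu
  have hui : Real.exp (-γ * φ i) = u i := rfl
  have hexpand : -γ * Ham σ γ η La Lb φ δ i * u i
      = (γ ^ 2 * σ ^ 2 / 2 * (i.1 : ℝ) ^ 2 + γ * η * (i.1 : ℝ) ^ 2
          - Lqa La i δ.1 - Lqb Lb i δ.2) * u i
        + Lqa La i δ.1 * (Real.exp (-γ * DelA φ δ i) * u i)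
        + Lqb Lb i δ.2 * (Real.exp (-γ * DelB φ δ i) * u i) := by
    simp only [Ham]
    field_simp
    ring
  have hsum : (Kmat Q σ γ η La Lb δ).mulVec u i
      = (∑ j, (if j = i then
            γ ^ 2 * σ ^ 2 / 2 * (i.1 : ℝ) ^ 2 + γ * η * (i.1 : ℝ) ^ 2
              - Lqa La i δ.1 - Lqb Lb i δ.2 else 0) * u j)
        + (∑ j, (if j.1 = i.1 - 1 then Lqa La i δ.1 * Real.exp (-γ * δ.1) else 0) * u j)
        + (∑ j, (if j.1 = i.1 + 1 then Lqb Lb i δ.2 * Real.exp (-γ * δ.2) else 0) * u j) := by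
    simp only [Matrix.mulVec, dotProduct, Kmat, add_mul]
    rw [Finset.sum_add_distrib, Finset.sum_add_distrib]
  have S1 : (∑ j, (if j = i then
        γ ^ 2 * σ ^ 2 / 2 * (i.1 : ℝ) ^ 2 + γ * η * (i.1 : ℝ) ^ 2
          - Lqa La i δ.1 - Lqb Lb i δ.2 else 0) * u j)
      = (γ ^ 2 * σ ^ 2 / 2 * (i.1 : ℝ) ^ 2 + γ * η * (i.1 : ℝ) ^ 2
          - Lqa La i δ.1 - Lqb Lb i δ.2) * u i := by
    simp [ite_mul]
  have hi2 := i.2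
  rw [Finset.mem_Icc] at hi2
  have hA : (∑ j, (if j.1 = i.1 - 1 then Lqa La i δ.1 * Real.exp (-γ * δ.1) else 0) * u j)
      = Lqa La i δ.1 * (Real.exp (-γ * DelA φ δ i) * u i) := by
    by_cases hlt : -(Q : ℤ) < i.1
    · have hm : i.1 - 1 ∈ Finset.Icc (-(Q : ℤ)) (Q : ℤ) := by rw [Finset.mem_Icc]; omega
      have hea : Real.exp (-γ * DelA φ δ i) * u i
          = Real.exp (-γ * δ.1) * u ⟨i.1 - 1, hm⟩ := by
        simp only [DelA, if_pos hlt, ext, dif_pos hm, hu, ← Real.exp_add]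
        congr 1; ring
      rw [hea, Finset.sum_eq_single (⟨i.1 - 1, hm⟩ : QI Q)]
      · norm_num [mul_assoc]
      · intro b _ hb
        have : b.1 ≠ i.1 - 1 := fun hh => hb (Subtype.ext hh)
        simp [this]
      · intro h; exact absurd (Finset.mem_univ _) h
    · have hz : Lqa La i δ.1 = 0 := by simp [Lqa, hlt]
      rw [hz]
      rw [Finset.sum_eq_zero]
      · ring
      · intro j _
        have hj := j.2; rw [Finset.mem_Icc] at hj
        have : j.1 ≠ i.1 - 1 := by omega
        simp [this, hz]
  have hB : (∑ j, (if j.1 = i.1 + 1 then Lqb Lb i δ.2 * Real.exp (-γ * δ.2) else 0) * u j)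
      = Lqb Lb i δ.2 * (Real.exp (-γ * DelB φ δ i) * u i) := by
    by_cases hlt : i.1 < (Q : ℤ)
    · have hm : i.1 + 1 ∈ Finset.Icc (-(Q : ℤ)) (Q : ℤ) := by rw [Finset.mem_Icc]; omega
      have heb : Real.exp (-γ * DelB φ δ i) * u i
          = Real.exp (-γ * δ.2) * u ⟨i.1 + 1, hm⟩ := by
        simp only [DelB, if_pos hlt, ext, dif_pos hm, hu, ← Real.exp_add]
        congr 1; ring
      rw [heb, Finset.sum_eq_single (⟨i.1 + 1, hm⟩ : QI Q)]
      · norm_num [mul_assoc]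
      · intro b _ hb
        have : b.1 ≠ i.1 + 1 := fun hh => hb (Subtype.ext hh)
        simp [this]
      · intro h; exact absurd (Finset.mem_univ _) h
    · have hz : Lqb Lb i δ.2 = 0 := by simp [Lqb, hlt]
      rw [hz]
      rw [Finset.sum_eq_zero]
      · ring
      · intro j _
        have hj := j.2; rw [Finset.mem_Icc] at hj
        have : j.1 ≠ i.1 + 1 := by omega
        simp [this, hz]
  rw [hui, hsum, S1, hA, hB, hexpand]

set_option maxHeartbeats 2000000 in
/-- one-step risk-sensitive consistency. -/
theorem one_step_consistency
    (T : ℝ) (Q : ℕ) (σ γ Φ η dlo dhi Lbar mlo mhi : ℝ)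
    (La Lb : ℝ → ℝ) (ν : Measure (ℝ × ℝ)) (m : ℝ × ℝ → ℝ)
    (hT : 0 < T) (hσ : 0 < σ) (hγ : 0 < γ) (hΦ : 0 ≤ Φ) (hη : 0 ≤ η) (hd : dlo < dhi)
    (hLa : ContDiffOn ℝ 1 La (Set.Icc dlo dhi)) (hLb : ContDiffOn ℝ 1 Lb (Set.Icc dlo dhi))
    (hLa_bd : ∀ x ∈ Set.Icc dlo dhi, 0 ≤ La x ∧ La x ≤ Lbar)
    (hLb_bd : ∀ x ∈ Set.Icc dlo dhi, 0 ≤ Lb x ∧ Lb x ≤ Lbar)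
    (hm : Measurable m) (hmlo : 0 < mlo) (hmhi : mlo ≤ mhi)
    (hm_bd : ∀ᵐ δ ∂(volume.restrict (Aset dlo dhi)), mlo ≤ m δ ∧ m δ ≤ mhi)
    (hν : ν = (volume.restrict (Aset dlo dhi)).withDensity fun δ => ENNReal.ofReal (m δ))
    (hνprob : IsProbabilityMeasure ν)
    (B : ℝ) (hB : 0 < B) :
    ∃ h₀ > (0 : ℝ), ∃ C : ℝ,
      ∀ h : ℝ, 0 < h → h ≤ h₀ →
        ∀ φ : Vec Q, (∀ r : QI Q, |φ r| ≤ B) →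
          (∀ q : QI Q, ∀ δ ∈ Aset dlo dhi,
            |CE σ γ η La Lb h δ φ q - φ q - h * Ham σ γ η La Lb φ δ q| ≤ C * h ^ 2) ∧
          (∀ lam : ℝ, 0 < lam → lam ≤ 1 → ∀ q : QI Q,
            |Top σ γ η La Lb ν h lam φ q - (φ q + h * Hlam σ γ η La Lb ν lam φ q)|
              ≤ C * h ^ 2) := by
  classical
  haveI : IsProbabilityMeasure ν := hνprob
  have hγ' : γ ≠ 0 := ne_of_gt hγ
  have hdlo : dlo ∈ Set.Icc dlo dhi := ⟨le_refl _, le_of_lt hd⟩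
  have hLbar0 : 0 ≤ Lbar := le_trans (hLa_bd dlo hdlo).1 (hLa_bd dlo hdlo).2
  obtain ⟨Nc, hNcdef⟩ : ∃ x : ℝ, x = (Fintype.card (QI Q) : ℝ) := ⟨_, rfl⟩
  have hNc1 : 1 ≤ Nc := by
    have h1 : 1 ≤ Fintype.card (QI Q) := Fintype.card_pos_iff.mpr ⟨⟨0, by simp⟩⟩
    rw [hNcdef]; exact_mod_cast h1
  have hNc0 : 0 ≤ Nc := le_trans zero_le_one hNc1
  obtain ⟨c, hcdef⟩ : ∃ x : ℝ,
      x = γ^2*σ^2/2*(Q:ℝ)^2 + γ*η*(Q:ℝ)^2 + 2*Lbar + 2*(Lbar*Real.exp (γ*|dlo|)) := ⟨_, rfl⟩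
  have hc0 : 0 ≤ c := by
    have h1 : (0:ℝ) ≤ γ^2*σ^2/2*(Q:ℝ)^2 := by positivity
    have h2 : (0:ℝ) ≤ γ*η*(Q:ℝ)^2 := by positivity
    have h4 : (0:ℝ) ≤ Lbar*Real.exp (γ*|dlo|) :=
      mul_nonneg hLbar0 (le_of_lt (Real.exp_pos _))
    rw [hcdef]; linarith
  -- entrywise bound for Kmat on Aset
  have Kb : ∀ δ ∈ Aset dlo dhi, ∀ i j : QI Q, |Kmat Q σ γ η La Lb δ i j| ≤ c := by
    rintro δ ⟨hδ1, hδ2⟩ i j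
    simp only [Kmat]
    have hqQ : ((i.1 : ℝ))^2 ≤ (Q:ℝ)^2 := by
      have h2 := i.2; rw [Finset.mem_Icc] at h2
      have ha : -(Q:ℝ) ≤ (i.1:ℝ) := by exact_mod_cast h2.1
      have hb : (i.1:ℝ) ≤ (Q:ℝ) := by exact_mod_cast h2.2
      exact sq_le_sq' ha hb
    have hLa1 : 0 ≤ Lqa La i δ.1 ∧ Lqa La i δ.1 ≤ Lbar := by
      simp only [Lqa]; split_ifs
      · exact hLa_bd _ hδ1
      · exact ⟨le_refl 0, hLbar0⟩
    have hLb1 : 0 ≤ Lqb Lb i δ.2 ∧ Lqb Lb i δ.2 ≤ Lbar := by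
      simp only [Lqb]; split_ifs
      · exact hLb_bd _ hδ2
      · exact ⟨le_refl 0, hLbar0⟩
    have hexpa : Real.exp (-γ * δ.1) ≤ Real.exp (γ*|dlo|) := by
      apply Real.exp_le_exp.2
      have h1 : -δ.1 ≤ |dlo| := by
        have := neg_abs_le dlo; have := hδ1.1; linarith
      nlinarith [mul_le_mul_of_nonneg_left h1 (le_of_lt hγ)]
    have hexpb : Real.exp (-γ * δ.2) ≤ Real.exp (γ*|dlo|) := by
      apply Real.exp_le_exp.2
      have h1 : -δ.2 ≤ |dlo| := by
        have := neg_abs_le dlo; have := hδ2.1; linarith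
      nlinarith [mul_le_mul_of_nonneg_left h1 (le_of_lt hγ)]
    have t1 : |(if j = i then
        γ ^ 2 * σ ^ 2 / 2 * (i.1 : ℝ) ^ 2 + γ * η * (i.1 : ℝ) ^ 2
          - Lqa La i δ.1 - Lqb Lb i δ.2 else 0)|
        ≤ γ^2*σ^2/2*(Q:ℝ)^2 + γ*η*(Q:ℝ)^2 + 2*Lbar := by
      split_ifs
      · rw [abs_le]
        constructor
        · have h1 : (0:ℝ) ≤ γ^2*σ^2/2*(i.1:ℝ)^2 := by positivity
          have h2 : (0:ℝ) ≤ γ*η*(i.1:ℝ)^2 := by positivity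
          have h3 : (0:ℝ) ≤ γ^2*σ^2/2*(Q:ℝ)^2 := by positivity
          have h4 : (0:ℝ) ≤ γ*η*(Q:ℝ)^2 := by positivity
          linarith [hLa1.2, hLb1.2]
        · have h1 : γ^2*σ^2/2*(i.1:ℝ)^2 ≤ γ^2*σ^2/2*(Q:ℝ)^2 :=
            mul_le_mul_of_nonneg_left hqQ (by positivity)
          have h2 : γ*η*(i.1:ℝ)^2 ≤ γ*η*(Q:ℝ)^2 :=
            mul_le_mul_of_nonneg_left hqQ (by positivity)
          linarith [hLa1.1, hLb1.1, hLbar0]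
      · simp
        have h3 : (0:ℝ) ≤ γ^2*σ^2/2*(Q:ℝ)^2 := by positivity
        have h4 : (0:ℝ) ≤ γ*η*(Q:ℝ)^2 := by positivity
        linarith
    have t2 : |(if j.1 = i.1 - 1 then Lqa La i δ.1 * Real.exp (-γ * δ.1) else 0)|
        ≤ Lbar*Real.exp (γ*|dlo|) := by
      split_ifs
      · rw [abs_of_nonneg (mul_nonneg hLa1.1 (le_of_lt (Real.exp_pos _)))]
        exact mul_le_mul hLa1.2 hexpa (le_of_lt (Real.exp_pos _)) hLbar0
      · simp
        exact mul_nonneg hLbar0 (le_of_lt (Real.exp_pos _))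
    have t3 : |(if j.1 = i.1 + 1 then Lqb Lb i δ.2 * Real.exp (-γ * δ.2) else 0)|
        ≤ Lbar*Real.exp (γ*|dlo|) := by
      split_ifs
      · rw [abs_of_nonneg (mul_nonneg hLb1.1 (le_of_lt (Real.exp_pos _)))]
        exact mul_le_mul hLb1.2 hexpb (le_of_lt (Real.exp_pos _)) hLbar0
      · simp
        exact mul_nonneg hLbar0 (le_of_lt (Real.exp_pos _))
    calc |(if j = i then
            γ ^ 2 * σ ^ 2 / 2 * (i.1 : ℝ) ^ 2 + γ * η * (i.1 : ℝ) ^ 2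
              - Lqa La i δ.1 - Lqb Lb i δ.2 else 0)
          + (if j.1 = i.1 - 1 then Lqa La i δ.1 * Real.exp (-γ * δ.1) else 0)
          + (if j.1 = i.1 + 1 then Lqb Lb i δ.2 * Real.exp (-γ * δ.2) else 0)|
        ≤ |(if j = i then
            γ ^ 2 * σ ^ 2 / 2 * (i.1 : ℝ) ^ 2 + γ * η * (i.1 : ℝ) ^ 2
              - Lqa La i δ.1 - Lqb Lb i δ.2 else 0)|
          + |(if j.1 = i.1 - 1 then Lqa La i δ.1 * Real.exp (-γ * δ.1) else 0)|
          + |(if j.1 = i.1 + 1 then Lqb Lb i δ.2 * Real.exp (-γ * δ.2) else 0)| := by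
          apply le_trans (abs_add_le _ _)
          exact add_le_add (abs_add_le _ _) le_rfl
      _ ≤ c := by rw [hcdef]; linarith
  obtain ⟨M', hM'def⟩ : ∃ x : ℝ, x = Nc * c := ⟨_, rfl⟩
  have hM'0 : 0 ≤ M' := by rw [hM'def]; exact mul_nonneg hNc0 hc0
  obtain ⟨ub, hubdef⟩ : ∃ x : ℝ, x = Real.exp (γ*B) := ⟨_, rfl⟩
  obtain ⟨lb, hlbdef⟩ : ∃ x : ℝ, x = Real.exp (-(γ*B)) := ⟨_, rfl⟩
  have hub0 : 0 < ub := hubdef ▸ Real.exp_pos _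
  have hlb0 : 0 < lb := hlbdef ▸ Real.exp_pos _
  obtain ⟨Ex, hExdef⟩ : ∃ x : ℝ, x = ∑' k:ℕ, M'^k / (k.factorial : ℝ) := ⟨_, rfl⟩
  have hEx0 : 0 ≤ Ex := by
    rw [hExdef]
    exact tsum_nonneg (fun k => by positivity)
  obtain ⟨Ebd, hEbddef⟩ : ∃ x : ℝ, x = M'^2 * Nc * ub * Ex := ⟨_, rfl⟩
  have hE0 : 0 ≤ Ebd := by
    rw [hEbddef]
    exact mul_nonneg (mul_nonneg (mul_nonneg (sq_nonneg _) hNc0) hub0.le) hEx0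
  obtain ⟨Dv, hDvdef⟩ : ∃ x : ℝ, x = Nc * ub * M' := ⟨_, rfl⟩
  have hDv0 : 0 ≤ Dv := by
    rw [hDvdef]
    exact mul_nonneg (mul_nonneg hNc0 hub0.le) hM'0
  obtain ⟨h₀, hh₀def⟩ : ∃ x : ℝ, x = min 1 (lb/(2*(Dv+Ebd)+1)) := ⟨_, rfl⟩
  have hh₀pos : 0 < h₀ := by
    rw [hh₀def]
    exact lt_min one_pos (div_pos hlb0 (by linarith))
  obtain ⟨C, hCdef⟩ : ∃ x : ℝ, x = (1/γ) * (2*((Dv+Ebd)/lb)^2 + Ebd/lb) := ⟨_, rfl⟩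
  have hC0 : 0 ≤ C := by
    rw [hCdef]
    have h1 : (0:ℝ) ≤ Ebd/lb := div_nonneg hE0 hlb0.le
    have h2 : (0:ℝ) ≤ 2*((Dv+Ebd)/lb)^2 := by positivity
    have h3 : (0:ℝ) ≤ 1/γ := by positivity
    exact mul_nonneg h3 (by linarith)
  -- pow entry bound, for any h and δ ∈ A
  have hpowA : ∀ h : ℝ, 0 < h → ∀ δ ∈ Aset dlo dhi, ∀ (k : ℕ) (i j : QI Q),
      |((h • Kmat Q σ γ η La Lb δ) ^ k) i j| ≤ (h * M')^k := by
    intro h hh δ hδ k i j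
    have heb : ∀ i j : QI Q, |(h • Kmat Q σ γ η La Lb δ) i j| ≤ h * c := by
      intro i j
      rw [Matrix.smul_apply, smul_eq_mul, abs_mul, abs_of_pos hh]
      exact mul_le_mul_of_nonneg_left (Kb δ hδ i j) (le_of_lt hh)
    have h1 := pow_entry_bound (h • Kmat Q σ γ η La Lb δ) (h*c)
      (mul_nonneg hh.le hc0) heb k i j
    have h2 : (Fintype.card (QI Q) : ℝ)*(h*c) = h*M' := by
      rw [hM'def, hNcdef]; ring
    rwa [h2] at h1
  have hsumM : ∀ x : ℝ, Summable (fun k : ℕ => x^k / (k.factorial:ℝ)) :=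
    fun x => Real.summable_pow_div_factorial x
  -- the key one-step expansion
  have key : ∀ h : ℝ, 0 < h → h ≤ h₀ → ∀ φ : Vec Q, (∀ r, |φ r| ≤ B) →
      ∀ (q : QI Q), ∀ δ ∈ Aset dlo dhi,
        lb/2 ≤ (matExp (h • Kmat Q σ γ η La Lb δ)).mulVec
            (fun r => Real.exp (-γ * φ r)) q ∧
        |CE σ γ η La Lb h δ φ q - φ q - h * Ham σ γ η La Lb φ δ q| ≤ C * h^2 := by
    intro h hh hhh φ hφ q δ hδ
    have hh1 : h ≤ 1 := le_trans hhh (by rw [hh₀def]; exact min_le_left _ _)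
    obtain ⟨u, hudef⟩ : ∃ x : Vec Q, x = fun r => Real.exp (-γ * φ r) := ⟨_, rfl⟩
    have hu0 : ∀ r, 0 < u r := fun r => by simp only [hudef]; exact Real.exp_pos _
    have hubr : ∀ r, u r ≤ ub := by
      intro r
      simp only [hudef, hubdef]
      apply Real.exp_le_exp.2
      have h1 := (abs_le.1 (hφ r)).1
      nlinarith [mul_le_mul_of_nonneg_left (show -φ r ≤ B by linarith) (le_of_lt hγ)]
    have hlbr : ∀ r, lb ≤ u r := by
      intro r
      simp only [hudef, hlbdef]
      apply Real.exp_le_exp.2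
      have h1 := (abs_le.1 (hφ r)).2
      nlinarith [mul_le_mul_of_nonneg_left (show φ r ≤ B by linarith) (le_of_lt hγ)]
    obtain ⟨Mh, hMhdef⟩ : ∃ x : Matrix (QI Q) (QI Q) ℝ, x = h • Kmat Q σ γ η La Lb δ :=
      ⟨_, rfl⟩
    have hpow : ∀ (k : ℕ) (i j : QI Q), |(Mh ^ k) i j| ≤ (h * M')^k := fun k i j => by
      rw [hMhdef]; exact hpowA h hh δ hδ k i j
    have hSm : ∀ i j : QI Q, Summable (fun k : ℕ => ((k.factorial:ℝ))⁻¹ * (Mh ^ k) i j) := by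
      intro i j
      apply Summable.of_abs
      apply Summable.of_nonneg_of_le (fun k => abs_nonneg _) _ (hsumM (h*M'))
      intro k
      rw [abs_mul, abs_inv, abs_of_nonneg (by positivity : (0:ℝ) ≤ (k.factorial:ℝ))]
      rw [div_eq_inv_mul]
      exact mul_le_mul_of_nonneg_left (hpow k i j) (by positivity)
    obtain ⟨F, hF⟩ : ∃ x : ℕ → ℝ,
      x = fun k => ((k.factorial:ℝ))⁻¹ * ((Mh ^ k).mulVec u q) := ⟨_, rfl⟩
    have hFb : ∀ k, |F k| ≤ (Nc * ub) * ((h*M')^k / (k.factorial:ℝ)) := by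
      intro k
      have h1 : |(Mh ^ k).mulVec u q| ≤ Nc * ((h*M')^k * ub) := by
        calc |(Mh ^ k).mulVec u q| = |∑ j, (Mh ^ k) q j * u j| := rfl
          _ ≤ ∑ j, |(Mh ^ k) q j * u j| := Finset.abs_sum_le_sum_abs _ _
          _ ≤ ∑ _j : QI Q, (h*M')^k * ub := by
              apply Finset.sum_le_sum
              intro j _
              rw [abs_mul, abs_of_pos (hu0 j)]
              exact mul_le_mul (hpow k q j) (hubr j) (le_of_lt (hu0 j))
                (pow_nonneg (mul_nonneg hh.le hM'0) k)
          _ = Nc * ((h*M')^k * ub) := by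
              rw [Finset.sum_const, Finset.card_univ, nsmul_eq_mul, hNcdef]
      calc |F k| = ((k.factorial:ℝ))⁻¹ * |(Mh ^ k).mulVec u q| := by
            simp only [hF]
            rw [abs_mul, abs_inv, abs_of_nonneg (by positivity : (0:ℝ) ≤ (k.factorial:ℝ))]
        _ ≤ ((k.factorial:ℝ))⁻¹ * (Nc * ((h*M')^k * ub)) :=
            mul_le_mul_of_nonneg_left h1 (by positivity)
        _ = (Nc * ub) * ((h*M')^k / (k.factorial:ℝ)) := by
            rw [div_eq_inv_mul]; ring
    have hFsum : Summable F := by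
      apply Summable.of_abs
      apply Summable.of_nonneg_of_le (fun k => abs_nonneg _) hFb
      exact (hsumM (h*M')).mul_left _
    have hSdec : (matExp Mh).mulVec u q = ∑' k, F k := by
      have e0 : (matExp Mh).mulVec u q
          = ∑ j, (∑' k, ((k.factorial:ℝ))⁻¹ * (Mh ^ k) q j) * u j := rfl
      have e1 : ∀ j : QI Q, (∑' k, ((k.factorial:ℝ))⁻¹ * (Mh ^ k) q j) * u j
          = ∑' k, ((k.factorial:ℝ))⁻¹ * (Mh ^ k) q j * u j :=
        fun j => (tsum_mul_right).symm
      rw [e0]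
      simp only [e1]
      rw [← Summable.tsum_finsetSum (fun j _ => (hSm q j).mul_right (u j))]
      apply tsum_congr
      intro k
      simp only [hF]
      show ∑ j, ((k.factorial:ℝ))⁻¹ * (Mh ^ k) q j * u j
        = ((k.factorial:ℝ))⁻¹ * ∑ j, (Mh ^ k) q j * u j
      rw [Finset.mul_sum]
      apply Finset.sum_congr rfl
      intro j _
      ring
    have hF0 : F 0 = u q := by
      simp only [hF]
      simp [Matrix.one_mulVec]
    have hF1 : F 1 = h * (-γ * Ham σ γ η La Lb φ δ q * u q) := by
      simp only [hF]
      simp only [pow_one, Nat.factorial_one, Nat.cast_one, inv_one, one_mul, hMhdef]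
      rw [Matrix.smul_mulVec]
      simp only [Pi.smul_apply, smul_eq_mul]
      simp only [hudef]
      rw [Kmul hγ' δ φ q]
    obtain ⟨R, hRdef⟩ : ∃ x : ℝ, x = ∑' k, F (k+2) := ⟨_, rfl⟩
    have hsplit : (matExp Mh).mulVec u q = u q + F 1 + R := by
      rw [hSdec, ← Summable.sum_add_tsum_nat_add 2 hFsum, Finset.sum_range_succ,
        Finset.sum_range_one, hF0, ← hRdef]
    have hRb : |R| ≤ Ebd * h^2 := by
      rw [hRdef]
      have h2 : Summable (fun k => F (k+2)) := (summable_nat_add_iff (f := F) 2).2 hFsum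
      have h1 : ∀ k:ℕ, |F (k+2)| ≤ (h^2 * M'^2 * Nc * ub) * (M'^k / (k.factorial:ℝ)) := by
        intro k
        refine le_trans (hFb (k+2)) ?_
        have e2 : h^k ≤ 1 := by
          calc h^k ≤ 1^k := pow_le_pow_left₀ hh.le hh1 k
            _ = 1 := one_pow k
        have e3 : ((k.factorial:ℝ)) ≤ (((k+2).factorial:ℝ)) := by
          exact_mod_cast Nat.factorial_le (by omega)
        have e4 : (h*M')^(k+2) / (((k+2).factorial):ℝ) ≤ (h^2*M'^2*M'^k)/(k.factorial:ℝ) := by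
          apply div_le_div₀ ?_ ?_ (by positivity) e3
          · exact mul_nonneg (mul_nonneg (by positivity) (sq_nonneg _)) (pow_nonneg hM'0 k)
          · calc (h*M')^(k+2) = h^2*M'^2*(h^k*M'^k) := by ring
              _ ≤ h^2*M'^2*(1*M'^k) := by
                  apply mul_le_mul_of_nonneg_left _ (by positivity)
                  exact mul_le_mul_of_nonneg_right e2 (pow_nonneg hM'0 k)
              _ = h^2*M'^2*M'^k := by ring
        calc (Nc * ub) * ((h*M')^(k+2)/(((k+2).factorial):ℝ))
            ≤ (Nc * ub) * ((h^2*M'^2*M'^k)/(k.factorial:ℝ)) :=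
              mul_le_mul_of_nonneg_left e4 (mul_nonneg hNc0 hub0.le)
          _ = (h^2 * M'^2 * Nc * ub) * (M'^k / (k.factorial:ℝ)) := by
              rw [div_eq_inv_mul, div_eq_inv_mul]; ring
      have h3 : Summable (fun k:ℕ => (h^2*M'^2*Nc*ub) * (M'^k/(k.factorial:ℝ))) :=
        (hsumM M').mul_left _
      calc |∑' k, F (k+2)| ≤ ∑' k, |F (k+2)| := by
            have := norm_tsum_le_tsum_norm (f := fun k => F (k+2)) (by simpa using h2.abs)
            simpa using this
        _ ≤ ∑' k, (h^2*M'^2*Nc*ub) * (M'^k/(k.factorial:ℝ)) := Summable.tsum_le_tsum h1 h2.abs h3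
        _ = (h^2*M'^2*Nc*ub) * Ex := by rw [tsum_mul_left, ← hExdef]
        _ = Ebd * h^2 := by rw [hEbddef]; ring
    have hF1b : |F 1| ≤ h * Dv := by
      refine le_trans (hFb 1) ?_
      simp only [pow_one, Nat.factorial_one, Nat.cast_one, div_one]
      rw [hDvdef]
      exact le_of_eq (by ring)
    clear hSdec hSm hFb hFsum hpow hF0
    have hsq : h^2 ≤ h := by
      calc h^2 = h*h := pow_two h
        _ ≤ 1*h := mul_le_mul_of_nonneg_right hh1 hh.le
        _ = h := one_mul h
    have htb : |F 1 + R| ≤ h*(Dv+Ebd) := by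
      calc |F 1 + R| ≤ |F 1| + |R| := abs_add_le _ _
        _ ≤ h*Dv + Ebd*h^2 := add_le_add hF1b hRb
        _ ≤ h*Dv + Ebd*h := add_le_add le_rfl (mul_le_mul_of_nonneg_left hsq hE0)
        _ = h*(Dv+Ebd) := by ring
    have hhalf : h*(Dv+Ebd) ≤ lb/2 := by
      have h1 : h ≤ lb/(2*(Dv+Ebd)+1) :=
        le_trans hhh (by rw [hh₀def]; exact min_le_right _ _)
      have h2 : (0:ℝ) < 2*(Dv+Ebd)+1 := by linarith
      have h3 : h * (2*(Dv+Ebd)+1) ≤ lb := (le_div_iff₀ h2).1 h1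
      have h4 : h * (2*(Dv+Ebd)+1) = 2*(h*(Dv+Ebd)) + h := by ring
      linarith
    have hSpos : lb/2 ≤ (matExp (h • Kmat Q σ γ η La Lb δ)).mulVec
        (fun r => Real.exp (-γ * φ r)) q := by
      rw [← hMhdef, ← hudef, hsplit]
      have h5 := abs_le.1 htb
      linarith [hlbr q]
    refine ⟨hSpos, ?_⟩
    obtain ⟨t, htdef⟩ : ∃ x : ℝ, x = (F 1 + R)/u q := ⟨_, rfl⟩
    have htle : |t| ≤ h*(Dv+Ebd)/lb := by
      rw [htdef, abs_div, abs_of_pos (hu0 q)]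
      exact div_le_div₀ (by positivity) htb hlb0 (hlbr q)
    have ht12 : |t| ≤ 1/2 := by
      refine le_trans htle ?_
      rw [div_le_iff₀ hlb0]
      linarith
    have h1t : 0 < 1 + t := by
      have := abs_le.1 ht12
      linarith
    have hprod : u q + F 1 + R = u q * (1 + t) := by
      rw [htdef]
      field_simp [ne_of_gt (hu0 q)]
      ring
    have hCEeq : CE σ γ η La Lb h δ φ q = φ q - (1/γ) * Real.log (1+t) := by
      show -(1 / γ) * Real.log
        ((matExp (h • Kmat Q σ γ η La Lb δ)).mulVec (fun r => Real.exp (-γ * φ r)) q)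
        = φ q - (1/γ) * Real.log (1+t)
      rw [← hMhdef, ← hudef, hsplit, hprod,
        Real.log_mul (ne_of_gt (hu0 q)) (ne_of_gt h1t)]
      have hlog : Real.log (u q) = -γ * φ q := by
        simp only [hudef]; exact Real.log_exp _
      rw [hlog]
      field_simp
      ring
    have hHamEq : h * Ham σ γ η La Lb φ δ q = -(1/γ) * (t - R / u q) := by
      have huq : u q ≠ 0 := ne_of_gt (hu0 q)
      rw [htdef]
      have h5 : (F 1 + R) / u q - R / u q = F 1 / u q := by field_simp; ring
      rw [h5, hF1]
      field_simp
    have hkeyeq : CE σ γ η La Lb h δ φ q - φ q - h * Ham σ γ η La Lb φ δ q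
        = -(1/γ) * (Real.log (1+t) - t + R/u q) := by
      rw [hCEeq, hHamEq]; ring
    rw [hkeyeq, abs_mul]
    have habs1 : |(-(1/γ))| = 1/γ := by
      rw [abs_neg, abs_of_pos (by positivity)]
    rw [habs1]
    have hX : |Real.log (1+t) - t + R/u q| ≤ 2*(h*(Dv+Ebd)/lb)^2 + Ebd*h^2/lb := by
      have b1 : |Real.log (1+t) - t| ≤ 2 * t^2 := log_taylor ht12
      have b2 : t^2 ≤ (h*(Dv+Ebd)/lb)^2 := by
        rw [← sq_abs t]
        exact pow_le_pow_left₀ (abs_nonneg t) htle 2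
      have b3 : |R/u q| ≤ Ebd*h^2/lb := by
        rw [abs_div, abs_of_pos (hu0 q)]
        exact div_le_div₀ (mul_nonneg hE0 (sq_nonneg h)) hRb hlb0 (hlbr q)
      calc |Real.log (1+t) - t + R/u q| ≤ |Real.log (1+t) - t| + |R/u q| := abs_add_le _ _
        _ ≤ 2*t^2 + Ebd*h^2/lb := add_le_add b1 b3
        _ ≤ 2*(h*(Dv+Ebd)/lb)^2 + Ebd*h^2/lb := by linarith
    calc (1/γ) * |Real.log (1+t) - t + R/u q|
        ≤ (1/γ) * (2*(h*(Dv+Ebd)/lb)^2 + Ebd*h^2/lb) :=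
          mul_le_mul_of_nonneg_left hX (by positivity)
      _ = C * h^2 := by rw [hCdef]; field_simp
  -- conclude
  refine ⟨h₀, hh₀pos, C, ?_⟩
  intro h hh hhh φ hφ
  constructor
  · intro q δ hδ
    exact (key h hh hhh φ hφ q δ hδ).2
  · intro lam hlam hlam1 q
    have hhlpos : 0 < h * lam := mul_pos hh hlam
    have hAm : MeasurableSet (Aset dlo dhi) :=
      (isClosed_Icc.prod isClosed_Icc).measurableSet
    have hcomp : IsCompact (Aset dlo dhi) := isCompact_Icc.prod isCompact_Icc
    have hac : ν ≪ volume.restrict (Aset dlo dhi) := by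
      rw [hν]; exact withDensity_absolutelyContinuous _ _
    have hae : ∀ᵐ δ ∂ν, δ ∈ Aset dlo dhi := hac.ae_le (ae_restrict_mem hAm)
    have cfst : ContinuousOn (fun δ : ℝ×ℝ => δ.1) (Aset dlo dhi) := continuous_fst.continuousOn
    have csnd : ContinuousOn (fun δ : ℝ×ℝ => δ.2) (Aset dlo dhi) := continuous_snd.continuousOn
    have contLa : ContinuousOn (fun δ : ℝ×ℝ => La δ.1) (Aset dlo dhi) :=
      (hLa.continuousOn).comp continuous_fst.continuousOn (fun δ hδ => hδ.1)
    have contLb : ContinuousOn (fun δ : ℝ×ℝ => Lb δ.2) (Aset dlo dhi) :=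
      (hLb.continuousOn).comp continuous_snd.continuousOn (fun δ hδ => hδ.2)
    have contK : ∀ i j : QI Q,
        ContinuousOn (fun δ => Kmat Q σ γ η La Lb δ i j) (Aset dlo dhi) := by
      intro i j
      simp only [Kmat]
      apply ContinuousOn.add
      apply ContinuousOn.add
      · split_ifs
        · refine ContinuousOn.sub (ContinuousOn.sub continuousOn_const ?_) ?_
          · simp only [Lqa]; split_ifs
            exacts [contLa, continuousOn_const]
          · simp only [Lqb]; split_ifs
            exacts [contLb, continuousOn_const]
        · exact continuousOn_const
      · split_ifs
        · refine ContinuousOn.mul ?_ ?_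
          · simp only [Lqa]; split_ifs
            exacts [contLa, continuousOn_const]
          · exact Real.continuous_exp.comp_continuousOn (continuousOn_const.mul cfst)
        · exact continuousOn_const
      · split_ifs
        · refine ContinuousOn.mul ?_ ?_
          · simp only [Lqb]; split_ifs
            exacts [contLb, continuousOn_const]
          · exact Real.continuous_exp.comp_continuousOn (continuousOn_const.mul csnd)
        · exact continuousOn_const
    have contPow : ∀ (k:ℕ) (i j : QI Q),
        ContinuousOn (fun δ => ((h • Kmat Q σ γ η La Lb δ)^k) i j) (Aset dlo dhi) := by
      intro k
      induction k with
      | zero =>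
        intro i j
        simp only [pow_zero]
        exact continuousOn_const
      | succ k ih =>
        intro i j
        have e : (fun δ => ((h • Kmat Q σ γ η La Lb δ)^(k+1)) i j)
            = fun δ => ∑ l, ((h • Kmat Q σ γ η La Lb δ)^k) i l
                * (h * Kmat Q σ γ η La Lb δ l j) := by
          funext δ
          rw [pow_succ, Matrix.mul_apply]
          apply Finset.sum_congr rfl
          intro l _
          rw [Matrix.smul_apply, smul_eq_mul]
        rw [e]
        apply continuousOn_finset_sum
        intro l _
        exact (ih i l).mul (continuousOn_const.mul (contK l j))
    have contS : ContinuousOn (fun δ =>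
        (matExp (h • Kmat Q σ γ η La Lb δ)).mulVec (fun r => Real.exp (-γ * φ r)) q)
        (Aset dlo dhi) := by
      have e : (fun δ => (matExp (h • Kmat Q σ γ η La Lb δ)).mulVec
            (fun r => Real.exp (-γ * φ r)) q)
          = fun δ => ∑ j, (∑' k:ℕ, ((k.factorial:ℝ))⁻¹
              * ((h • Kmat Q σ γ η La Lb δ)^k) q j) * Real.exp (-γ * φ j) := rfl
      rw [e]
      apply continuousOn_finset_sum
      intro j _
      apply ContinuousOn.mul _ continuousOn_const
      apply continuousOn_tsum (fun k => continuousOn_const.mul (contPow k q j)) (hsumM (h*M'))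
      intro k δ hδ
      rw [Real.norm_eq_abs, Pi.mul_apply, abs_mul, abs_inv,
        abs_of_nonneg (by positivity : (0:ℝ) ≤ (k.factorial:ℝ)), div_eq_inv_mul]
      exact mul_le_mul_of_nonneg_left (hpowA h hh δ hδ k q j) (by positivity)
    have contCE : ContinuousOn (fun δ => CE σ γ η La Lb h δ φ q) (Aset dlo dhi) := by
      have e : (fun δ => CE σ γ η La Lb h δ φ q)
          = fun δ => -(1/γ) * Real.log ((matExp (h • Kmat Q σ γ η La Lb δ)).mulVec
              (fun r => Real.exp (-γ * φ r)) q) := rfl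
      rw [e]
      apply ContinuousOn.mul continuousOn_const
      apply ContinuousOn.log contS
      intro δ hδ
      exact ne_of_gt (lt_of_lt_of_le (half_pos hlb0) (key h hh hhh φ hφ q δ hδ).1)
    have contHam : ContinuousOn (fun δ => Ham σ γ η La Lb φ δ q) (Aset dlo dhi) := by
      simp only [Ham, Lqa, Lqb, DelA, DelB]
      split_ifs
      · exact (continuousOn_const.add ((contLa.div_const γ).mul (continuousOn_const.sub
          (Real.continuous_exp.comp_continuousOn (continuousOn_const.mul
            ((cfst.add continuousOn_const).sub continuousOn_const)))))).add
          ((contLb.div_const γ).mul (continuousOn_const.sub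
          (Real.continuous_exp.comp_continuousOn (continuousOn_const.mul
            ((csnd.add continuousOn_const).sub continuousOn_const)))))
      · exact (continuousOn_const.add ((contLa.div_const γ).mul (continuousOn_const.sub
          (Real.continuous_exp.comp_continuousOn (continuousOn_const.mul
            ((cfst.add continuousOn_const).sub continuousOn_const)))))).add
          continuousOn_const
      · exact (continuousOn_const.add continuousOn_const).add
          ((contLb.div_const γ).mul (continuousOn_const.sub
          (Real.continuous_exp.comp_continuousOn (continuousOn_const.mul
            ((csnd.add continuousOn_const).sub continuousOn_const)))))
      · exact (continuousOn_const.add continuousOn_const).add continuousOn_const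
    have int_of : ∀ (f : ℝ×ℝ→ℝ) (b : ℝ), ContinuousOn f (Aset dlo dhi) →
        (∀ δ ∈ Aset dlo dhi, ‖f δ‖ ≤ b) → Integrable f ν := by
      intro f b hf hb
      have hm1 : AEStronglyMeasurable f ν :=
        AEStronglyMeasurable.mono_ac hac (hf.aestronglyMeasurable hAm)
      exact Integrable.mono' (integrable_const b) hm1 (hae.mono (fun δ hδ => hb δ hδ))
    obtain ⟨cbd, hcbd⟩ := hcomp.exists_bound_of_continuousOn contCE
    obtain ⟨Hb, hHb⟩ := hcomp.exists_bound_of_continuousOn contHam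
    have hAne : ((dlo,dlo) : ℝ×ℝ) ∈ Aset dlo dhi := ⟨hdlo, hdlo⟩
    obtain ⟨g1, hg1⟩ : ∃ g : ℝ×ℝ → ℝ,
      g = fun δ => Real.exp (CE σ γ η La Lb h δ φ q / (h * lam)) := ⟨_, rfl⟩
    obtain ⟨g2, hg2⟩ : ∃ g : ℝ×ℝ → ℝ,
      g = fun δ => Real.exp ((φ q + h * Ham σ γ η La Lb φ δ q) / (h * lam)) := ⟨_, rfl⟩
    obtain ⟨gH, hgH⟩ : ∃ g : ℝ×ℝ → ℝ,
      g = fun δ => Real.exp (Ham σ γ η La Lb φ δ q / lam) := ⟨_, rfl⟩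
    have cg1 : ContinuousOn g1 (Aset dlo dhi) := by
      rw [hg1]; exact Real.continuous_exp.comp_continuousOn (contCE.div_const _)
    have cg2 : ContinuousOn g2 (Aset dlo dhi) := by
      rw [hg2]
      exact Real.continuous_exp.comp_continuousOn
        ((continuousOn_const.add (continuousOn_const.mul contHam)).div_const _)
    have cgH : ContinuousOn gH (Aset dlo dhi) := by
      rw [hgH]; exact Real.continuous_exp.comp_continuousOn (contHam.div_const _)
    have bg1 : ∀ δ ∈ Aset dlo dhi, ‖g1 δ‖ ≤ Real.exp (cbd/(h*lam)) := by
      intro δ hδ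
      rw [hg1, Real.norm_eq_abs, abs_of_pos (Real.exp_pos _)]
      apply Real.exp_le_exp.2
      apply (div_le_div_iff_of_pos_right hhlpos).2
      exact le_trans (le_abs_self _) (by simpa [Real.norm_eq_abs] using hcbd δ hδ)
    have bg2 : ∀ δ ∈ Aset dlo dhi, ‖g2 δ‖ ≤ Real.exp ((B + h*Hb)/(h*lam)) := by
      intro δ hδ
      rw [hg2, Real.norm_eq_abs, abs_of_pos (Real.exp_pos _)]
      apply Real.exp_le_exp.2
      apply (div_le_div_iff_of_pos_right hhlpos).2
      have h1 : φ q ≤ B := (abs_le.1 (hφ q)).2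
      have h2 : Ham σ γ η La Lb φ δ q ≤ Hb :=
        le_trans (le_abs_self _) (by simpa [Real.norm_eq_abs] using hHb δ hδ)
      have h3 : h * Ham σ γ η La Lb φ δ q ≤ h * Hb :=
        mul_le_mul_of_nonneg_left h2 hh.le
      linarith
    have bgH : ∀ δ ∈ Aset dlo dhi, ‖gH δ‖ ≤ Real.exp (Hb/lam) := by
      intro δ hδ
      rw [hgH, Real.norm_eq_abs, abs_of_pos (Real.exp_pos _)]
      apply Real.exp_le_exp.2
      apply (div_le_div_iff_of_pos_right hlam).2
      exact le_trans (le_abs_self _) (by simpa [Real.norm_eq_abs] using hHb δ hδ)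
    have ig1 : Integrable g1 ν := int_of _ _ cg1 bg1
    have ig2 : Integrable g2 ν := int_of _ _ cg2 bg2
    have igH : Integrable gH ν := int_of _ _ cgH bgH
    have posI : ∀ (f : ℝ×ℝ→ℝ) (ε : ℝ), 0 < ε → Integrable f ν →
        (∀ δ ∈ Aset dlo dhi, ε ≤ f δ) → 0 < ∫ δ, f δ ∂ν := by
      intro f ε hε hint hlow
      have h1 : ε ≤ ∫ δ, f δ ∂ν := by
        have h2 := integral_mono_ae (integrable_const ε) hint
          (hae.mono (fun δ hδ => hlow δ hδ))
        simpa using h2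
      linarith
    have lg1 : ∀ δ ∈ Aset dlo dhi, Real.exp (-(cbd/(h*lam))) ≤ g1 δ := by
      intro δ hδ
      rw [hg1]
      apply Real.exp_le_exp.2
      rw [← neg_div]
      apply (div_le_div_iff_of_pos_right hhlpos).2
      have h1 : |CE σ γ η La Lb h δ φ q| ≤ cbd := by
        simpa [Real.norm_eq_abs] using hcbd δ hδ
      linarith [(abs_le.1 h1).1]
    have lg2 : ∀ δ ∈ Aset dlo dhi, Real.exp (-((B + h*Hb)/(h*lam))) ≤ g2 δ := by
      intro δ hδ
      rw [hg2]
      apply Real.exp_le_exp.2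
      rw [← neg_div]
      apply (div_le_div_iff_of_pos_right hhlpos).2
      have h1 : -B ≤ φ q := (abs_le.1 (hφ q)).1
      have h2 : |Ham σ γ η La Lb φ δ q| ≤ Hb := by
        simpa [Real.norm_eq_abs] using hHb δ hδ
      have h3 : -(h*Hb) ≤ h * Ham σ γ η La Lb φ δ q := by
        have := mul_le_mul_of_nonneg_left (abs_le.1 h2).1 hh.le
        linarith
      linarith
    have lgH : ∀ δ ∈ Aset dlo dhi, Real.exp (-(Hb/lam)) ≤ gH δ := by
      intro δ hδ
      rw [hgH]
      apply Real.exp_le_exp.2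
      rw [← neg_div]
      apply (div_le_div_iff_of_pos_right hlam).2
      have h1 : |Ham σ γ η La Lb φ δ q| ≤ Hb := by
        simpa [Real.norm_eq_abs] using hHb δ hδ
      linarith [(abs_le.1 h1).1]
    have pos1 : 0 < ∫ δ, g1 δ ∂ν := posI g1 _ (Real.exp_pos _) ig1 lg1
    have pos2 : 0 < ∫ δ, g2 δ ∂ν := posI g2 _ (Real.exp_pos _) ig2 lg2
    have posH : 0 < ∫ δ, gH δ ∂ν := posI gH _ (Real.exp_pos _) igH lgH
    obtain ⟨rr, hrr⟩ : ∃ x:ℝ, x = C*h/lam := ⟨_, rfl⟩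
    have hCh : C*h^2/(h*lam) = rr := by
      rw [hrr]; field_simp
    have cmp12 : ∀ᵐ δ ∂ν, g1 δ ≤ Real.exp rr * g2 δ := by
      refine hae.mono (fun δ hδ => ?_)
      rw [hg1, hg2, ← Real.exp_add]
      apply Real.exp_le_exp.2
      have hk := (key h hh hhh φ hφ q δ hδ).2
      have h2 : CE σ γ η La Lb h δ φ q
          ≤ φ q + h * Ham σ γ η La Lb φ δ q + C*h^2 := by
        have := (abs_le.1 hk).2; linarith
      calc CE σ γ η La Lb h δ φ q / (h*lam)
          ≤ (φ q + h * Ham σ γ η La Lb φ δ q + C*h^2)/(h*lam) :=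
            (div_le_div_iff_of_pos_right hhlpos).2 h2
        _ = rr + (φ q + h * Ham σ γ η La Lb φ δ q)/(h*lam) := by
            rw [add_div, hCh, add_comm]
    have cmp21 : ∀ᵐ δ ∂ν, g2 δ ≤ Real.exp rr * g1 δ := by
      refine hae.mono (fun δ hδ => ?_)
      rw [hg1, hg2, ← Real.exp_add]
      apply Real.exp_le_exp.2
      have hk := (key h hh hhh φ hφ q δ hδ).2
      have h2 : φ q + h * Ham σ γ η La Lb φ δ q
          ≤ CE σ γ η La Lb h δ φ q + C*h^2 := by
        have := (abs_le.1 hk).1; linarith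
      calc (φ q + h * Ham σ γ η La Lb φ δ q) / (h*lam)
          ≤ (CE σ γ η La Lb h δ φ q + C*h^2)/(h*lam) :=
            (div_le_div_iff_of_pos_right hhlpos).2 h2
        _ = rr + CE σ γ η La Lb h δ φ q/(h*lam) := by
            rw [add_div, hCh, add_comm]
    have I12 : ∫ δ, g1 δ ∂ν ≤ Real.exp rr * ∫ δ, g2 δ ∂ν := by
      have h1 := integral_mono_ae ig1 (ig2.const_mul (Real.exp rr)) cmp12
      rwa [integral_const_mul] at h1
    have I21 : ∫ δ, g2 δ ∂ν ≤ Real.exp rr * ∫ δ, g1 δ ∂ν := by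
      have h1 := integral_mono_ae ig2 (ig1.const_mul (Real.exp rr)) cmp21
      rwa [integral_const_mul] at h1
    have l1 : Real.log (∫ δ, g1 δ ∂ν) ≤ rr + Real.log (∫ δ, g2 δ ∂ν) := by
      have h1 := Real.log_le_log pos1 I12
      rwa [Real.log_mul (Real.exp_ne_zero _) (ne_of_gt pos2), Real.log_exp] at h1
    have l2 : Real.log (∫ δ, g2 δ ∂ν) ≤ rr + Real.log (∫ δ, g1 δ ∂ν) := by
      have h1 := Real.log_le_log pos2 I21
      rwa [Real.log_mul (Real.exp_ne_zero _) (ne_of_gt pos1), Real.log_exp] at h1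
    have labs : |Real.log (∫ δ, g1 δ ∂ν) - Real.log (∫ δ, g2 δ ∂ν)| ≤ rr :=
      abs_le.2 ⟨by linarith, by linarith⟩
    have hfac : (∫ δ, g2 δ ∂ν) = Real.exp (φ q/(h*lam)) * ∫ δ, gH δ ∂ν := by
      rw [← integral_const_mul]
      have h1 : g2 = fun δ => Real.exp (φ q/(h*lam)) * gH δ := by
        funext δ
        simp only [hg2, hgH]
        rw [← Real.exp_add]
        congr 1
        field_simp
      rw [h1]
    have hTop : Top σ γ η La Lb ν h lam φ q = h*lam*Real.log (∫ δ, g1 δ ∂ν) := by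
      simp only [hg1]; rfl
    have hHlamEq : Hlam σ γ η La Lb ν lam φ q = lam * Real.log (∫ δ, gH δ ∂ν) := by
      simp only [hgH]; rfl
    have hlog2 : Real.log (∫ δ, g2 δ ∂ν)
        = φ q/(h*lam) + Real.log (∫ δ, gH δ ∂ν) := by
      rw [hfac, Real.log_mul (Real.exp_ne_zero _) (ne_of_gt posH), Real.log_exp]
    have hfin : Top σ γ η La Lb ν h lam φ q
        - (φ q + h * Hlam σ γ η La Lb ν lam φ q)
        = h*lam*(Real.log (∫ δ, g1 δ ∂ν) - Real.log (∫ δ, g2 δ ∂ν)) := by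
      rw [hTop, hHlamEq, hlog2]
      field_simp
    rw [hfin, abs_mul, abs_of_pos hhlpos]
    calc (h*lam)*|Real.log (∫ δ, g1 δ ∂ν) - Real.log (∫ δ, g2 δ ∂ν)|
        ≤ (h*lam)*rr := mul_le_mul_of_nonneg_left labs (le_of_lt hhlpos)
      _ = C*h^2 := by rw [hrr]; field_simp

end MM
end
end

section
/- (Monotonicity and nonexpansiveness.) For every h>0 and λ>0, the operator T_h^λ satisfies: (i) monotonicity: if φ,ψ∈ℝ^{2Q+1} with φ_q≤ψ_q for all q∈𝒬, then (T_h^λφ)_q ≤ (T_h^λψ)_q for all q; (ii) translation invariance: T_h^λ(φ+c𝟙) = T_h^λφ + c𝟙 for every c∈ℝ, where 𝟙 is the all-ones vector; and consequently (iii) ‖T_h^λφ − T_h^λψ‖_∞ ≤ ‖φ−ψ‖_∞ for all φ,ψ. -/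
open MeasureTheory
open scoped Classical

noncomputable section

namespace MM

/-! ### Auxiliary lemmas -/

section MatExpAux
variable {n : Type*} [Fintype n] [DecidableEq n]

lemma pow_entry_nonneg {M : Matrix n n ℝ} (hM : ∀ i j, 0 ≤ M i j) :
    ∀ (k : ℕ) (i j : n), 0 ≤ (M ^ k) i j := by
  intro k
  induction k with
  | zero => intro i j; rw [pow_zero, Matrix.one_apply]; split <;> norm_num
  | succ k ih =>
    intro i j
    rw [pow_succ, Matrix.mul_apply]
    exact Finset.sum_nonneg fun l _ => mul_nonneg (ih i l) (hM l j)

lemma pow_entry_abs_le {M : Matrix n n ℝ} {C : ℝ} (hM : ∀ i j, |M i j| ≤ C) :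
    ∀ (k : ℕ) (i j : n), |(M ^ k) i j| ≤ (max 1 ((Fintype.card n : ℝ) * C)) ^ k := by
  set D := max 1 ((Fintype.card n : ℝ) * C) with hD
  have hD0 : (0:ℝ) ≤ D := le_trans zero_le_one (le_max_left _ _)
  intro k
  induction k with
  | zero => intro i j; rw [pow_zero, pow_zero, Matrix.one_apply]; split <;> norm_num
  | succ k ih =>
    intro i j
    rw [pow_succ, Matrix.mul_apply]
    calc |∑ l, (M ^ k) i l * M l j| ≤ ∑ l, |(M ^ k) i l * M l j| :=
          Finset.abs_sum_le_sum_abs _ _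
      _ ≤ ∑ _l : n, D ^ k * C := by
          refine Finset.sum_le_sum fun l _ => ?_
          rw [abs_mul]
          exact mul_le_mul (ih i l) (hM l j) (abs_nonneg _) (pow_nonneg hD0 _)
      _ = ((Fintype.card n : ℝ) * C) * D ^ k := by
          rw [Finset.sum_const, Finset.card_univ, nsmul_eq_mul]; ring
      _ ≤ D * D ^ k :=
          mul_le_mul_of_nonneg_right (le_max_right _ _) (pow_nonneg hD0 _)
      _ = D ^ (k + 1) := by rw [pow_succ]; ring

def entryBound (M : Matrix n n ℝ) : ℝ := ∑ p : n × n, |M p.1 p.2|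

lemma abs_entry_le_entryBound (M : Matrix n n ℝ) (i j : n) : |M i j| ≤ entryBound M :=
  Finset.single_le_sum (f := fun p : n × n => |M p.1 p.2|)
    (fun _ _ => abs_nonneg _) (Finset.mem_univ (i, j))

lemma matExp_summable (M : Matrix n n ℝ) (i j : n) :
    Summable fun k : ℕ => ((k.factorial : ℝ))⁻¹ * (M ^ k) i j := by
  set D := max 1 ((Fintype.card n : ℝ) * entryBound M) with hD
  refine Summable.of_abs ?_
  refine Summable.of_nonneg_of_le (fun k => abs_nonneg _) (fun k => ?_)
    (Real.summable_pow_div_factorial D)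
  rw [abs_mul, abs_inv, Nat.abs_cast, div_eq_inv_mul]
  exact mul_le_mul_of_nonneg_left
    (pow_entry_abs_le (abs_entry_le_entryBound M) k i j)
    (inv_nonneg.mpr (Nat.cast_nonneg _))

lemma matExp_hasSum (M : Matrix n n ℝ) :
    HasSum (fun k : ℕ => ((k.factorial : ℝ))⁻¹ • M ^ k) (matExp M) := by
  refine Pi.hasSum.mpr fun i => Pi.hasSum.mpr fun j => ?_
  simpa [matExp, smul_eq_mul] using (matExp_summable M i j).hasSum

lemma matExp_eq_exp (M : Matrix n n ℝ) : matExp M = NormedSpace.exp M := by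
  rw [NormedSpace.exp_eq_tsum ℝ]
  exact (matExp_hasSum M).tsum_eq.symm

lemma exp_smul_one (c : ℝ) :
    NormedSpace.exp (c • (1 : Matrix n n ℝ)) = Real.exp c • (1 : Matrix n n ℝ) := by
  letI : SeminormedRing (Matrix n n ℝ) := Matrix.linftyOpSemiNormedRing
  letI : NormedRing (Matrix n n ℝ) := Matrix.linftyOpNormedRing
  letI : NormedAlgebra ℝ (Matrix n n ℝ) := Matrix.linftyOpNormedAlgebra
  have hcomm := (NormedSpace.algebraMap_exp_comm (𝕂 := ℝ) (𝔸 := Matrix n n ℝ) c).symm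
  rw [Algebra.algebraMap_eq_smul_one, Algebra.algebraMap_eq_smul_one] at hcomm
  rw [Real.exp_eq_exp_ℝ]
  exact hcomm

lemma matExp_add_smul_one (M : Matrix n n ℝ) (c : ℝ) (i j : n) :
    matExp (M + c • (1 : Matrix n n ℝ)) i j = Real.exp c * matExp M i j := by
  rw [matExp_eq_exp, matExp_eq_exp]
  rw [Matrix.exp_add_of_commute M (c • 1) ((Commute.one_right M).smul_right c)]
  rw [exp_smul_one, Matrix.mul_smul, Matrix.mul_one]
  simp [Matrix.smul_apply]

lemma matExp_entry_nonneg {M : Matrix n n ℝ} (hM : ∀ i j, 0 ≤ M i j) (i j : n) :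
    0 ≤ matExp M i j :=
  tsum_nonneg fun k =>
    mul_nonneg (inv_nonneg.mpr (Nat.cast_nonneg _)) (pow_entry_nonneg hM k i j)

lemma one_le_matExp_diag {M : Matrix n n ℝ} (hM : ∀ i j, 0 ≤ M i j) (i : n) :
    1 ≤ matExp M i i := by
  have h0 : ((Nat.factorial 0 : ℝ))⁻¹ * (M ^ 0) i i = 1 := by
    simp [Matrix.one_apply]
  calc (1:ℝ) = ((Nat.factorial 0 : ℝ))⁻¹ * (M ^ 0) i i := h0.symm
    _ ≤ matExp M i i := Summable.le_tsum (matExp_summable M i i) 0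
        (fun k _ => mul_nonneg (inv_nonneg.mpr (Nat.cast_nonneg _))
          (pow_entry_nonneg hM k i i))

lemma matExp_entry_le {M : Matrix n n ℝ} {C : ℝ} (hM : ∀ i j, |M i j| ≤ C) (i j : n) :
    matExp M i j ≤ Real.exp (max 1 ((Fintype.card n : ℝ) * C)) := by
  set D := max 1 ((Fintype.card n : ℝ) * C) with hD
  have h3 : ∑' k : ℕ, D ^ k / (k.factorial : ℝ) = Real.exp D := by
    rw [Real.exp_eq_exp_ℝ, NormedSpace.exp_eq_tsum_div]
  have h2 : matExp M i j ≤ ∑' k : ℕ, D ^ k / k.factorial := by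
    refine Summable.tsum_le_tsum (fun k => ?_) (matExp_summable M i j)
      (Real.summable_pow_div_factorial D)
    refine le_trans (le_abs_self _) ?_
    rw [abs_mul, abs_inv, Nat.abs_cast, div_eq_inv_mul]
    exact mul_le_mul_of_nonneg_left (pow_entry_abs_le hM k i j)
      (inv_nonneg.mpr (Nat.cast_nonneg _))
  rw [h3] at h2
  exact h2

lemma matExp_shift_nonneg {M : Matrix n n ℝ} {c : ℝ}
    (h : ∀ i j, 0 ≤ (M + c • (1 : Matrix n n ℝ)) i j) (i j : n) :
    0 ≤ matExp M i j := by
  have hM : M = (M + c • (1 : Matrix n n ℝ)) + (-c) • (1 : Matrix n n ℝ) := by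
    rw [add_assoc, ← add_smul]; simp
  rw [hM, matExp_add_smul_one]
  exact mul_nonneg (Real.exp_pos _).le (matExp_entry_nonneg h i j)

lemma exp_neg_le_matExp_diag {M : Matrix n n ℝ} {c : ℝ}
    (h : ∀ i j, 0 ≤ (M + c • (1 : Matrix n n ℝ)) i j) (i : n) :
    Real.exp (-c) ≤ matExp M i i := by
  have hM : M = (M + c • (1 : Matrix n n ℝ)) + (-c) • (1 : Matrix n n ℝ) := by
    rw [add_assoc, ← add_smul]; simp
  rw [hM, matExp_add_smul_one]
  calc Real.exp (-c) = Real.exp (-c) * 1 := (mul_one _).symm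
    _ ≤ _ := mul_le_mul_of_nonneg_left (one_le_matExp_diag h i) (Real.exp_pos _).le

end MatExpAux

section MeasAux
variable {n : Type*} [Fintype n] [DecidableEq n] {α : Type*} [MeasurableSpace α]

lemma measurable_pow_entry {M : α → Matrix n n ℝ}
    (hM : ∀ i j, Measurable fun a => M a i j) (k : ℕ) :
    ∀ i j, Measurable fun a => ((M a) ^ k) i j := by
  induction k with
  | zero =>
    intro i j
    simp only [pow_zero]
    exact measurable_const
  | succ k ih =>
    intro i j
    simp only [pow_succ, Matrix.mul_apply]
    exact Finset.measurable_sum _ fun l _ => (ih i l).mul (hM l j)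

lemma measurable_matExp_entry {M : α → Matrix n n ℝ}
    (hM : ∀ i j, Measurable fun a => M a i j) (i j : n) :
    Measurable fun a => matExp (M a) i j := by
  apply measurable_of_tendsto_metrizable
    (f := fun N a => ∑ k ∈ Finset.range N, ((k.factorial : ℝ))⁻¹ * ((M a) ^ k) i j)
  · intro N
    exact Finset.measurable_sum _ fun k _ => (measurable_pow_entry hM k i j).const_mul _
  · rw [tendsto_pi_nhds]
    intro a
    exact (matExp_summable (M a) i j).hasSum.tendsto_sum_nat

lemma measurable_ite_const (c : Prop) [Decidable c] {f g : α → ℝ}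
    (hf : Measurable f) (hg : Measurable g) :
    Measurable fun a => if c then f a else g a := by
  by_cases hc : c <;> simp only [hc, if_true, if_false] <;> assumption

end MeasAux

section KmatAux
variable {Q : ℕ} {σ γ η Lbar dlo dhi h : ℝ} {La Lb : ℝ → ℝ} {δ : ℝ × ℝ}

lemma mem_Aset_iff {δ : ℝ × ℝ} :
    δ ∈ Aset dlo dhi ↔ δ.1 ∈ Set.Icc dlo dhi ∧ δ.2 ∈ Set.Icc dlo dhi := by
  simp only [Aset, Set.mem_prod, Set.mem_Icc]

lemma Lqa_bd (hLbar : 0 ≤ Lbar)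
    (hLa_bd : ∀ x ∈ Set.Icc dlo dhi, 0 ≤ La x ∧ La x ≤ Lbar)
    {x : ℝ} (hx : x ∈ Set.Icc dlo dhi) (q : QI Q) :
    0 ≤ Lqa La q x ∧ Lqa La q x ≤ Lbar := by
  unfold Lqa; split
  · exact hLa_bd _ hx
  · exact ⟨le_refl 0, hLbar⟩

lemma Lqb_bd (hLbar : 0 ≤ Lbar)
    (hLb_bd : ∀ x ∈ Set.Icc dlo dhi, 0 ≤ Lb x ∧ Lb x ≤ Lbar)
    {x : ℝ} (hx : x ∈ Set.Icc dlo dhi) (q : QI Q) :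
    0 ≤ Lqb Lb q x ∧ Lqb Lb q x ≤ Lbar := by
  unfold Lqb; split
  · exact hLb_bd _ hx
  · exact ⟨le_refl 0, hLbar⟩

lemma kmat_shift_nonneg (hγ : 0 < γ) (hη : 0 ≤ η) (hLbar : 0 ≤ Lbar)
    (hLa_bd : ∀ x ∈ Set.Icc dlo dhi, 0 ≤ La x ∧ La x ≤ Lbar)
    (hLb_bd : ∀ x ∈ Set.Icc dlo dhi, 0 ≤ Lb x ∧ Lb x ≤ Lbar)
    (hδ : δ ∈ Aset dlo dhi) (i j : QI Q) :
    0 ≤ (Kmat Q σ γ η La Lb δ + (2 * Lbar) • (1 : Matrix (QI Q) (QI Q) ℝ)) i j := by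
  obtain ⟨hδ1, hδ2⟩ := mem_Aset_iff.mp hδ
  have hLqa := Lqa_bd hLbar hLa_bd hδ1 (Q := Q) i
  have hLqb := Lqb_bd hLbar hLb_bd hδ2 (Q := Q) i
  simp only [Matrix.add_apply, Matrix.smul_apply, Matrix.one_apply, smul_eq_mul, Kmat]
  by_cases hji : j = i
  · subst hji
    have h2 : ¬(j.1 = j.1 - 1) := by omega
    have h3 : ¬(j.1 = j.1 + 1) := by omega
    rw [if_pos rfl, if_pos rfl, if_neg h2, if_neg h3]
    have e1 : 0 ≤ γ ^ 2 * σ ^ 2 / 2 * (j.1 : ℝ) ^ 2 := by positivity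
    have e2 : 0 ≤ γ * η * (j.1 : ℝ) ^ 2 := mul_nonneg (mul_nonneg hγ.le hη) (sq_nonneg _)
    nlinarith [hLqa.1, hLqa.2, hLqb.1, hLqb.2]
  · have hij : ¬(i = j) := fun hh' => hji hh'.symm
    rw [if_neg hji, if_neg hij]
    have t2 : 0 ≤ (if j.1 = i.1 - 1 then Lqa La i δ.1 * Real.exp (-γ * δ.1) else 0) := by
      split
      · exact mul_nonneg hLqa.1 (Real.exp_pos _).le
      · exact le_refl 0
    have t3 : 0 ≤ (if j.1 = i.1 + 1 then Lqb Lb i δ.2 * Real.exp (-γ * δ.2) else 0) := by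
      split
      · exact mul_nonneg hLqb.1 (Real.exp_pos _).le
      · exact le_refl 0
    linarith

def Kbound (Q : ℕ) (σ γ η Lbar dlo : ℝ) : ℝ :=
  γ ^ 2 * σ ^ 2 / 2 * (Q : ℝ) ^ 2 + γ * η * (Q : ℝ) ^ 2 + 2 * Lbar
    + 2 * (Lbar * Real.exp (-γ * dlo))

lemma qsq_le (i : QI Q) : (i.1 : ℝ) ^ 2 ≤ (Q : ℝ) ^ 2 := by
  have h' := Finset.mem_Icc.mp i.2
  have h1 : -(Q : ℝ) ≤ (i.1 : ℝ) := by exact_mod_cast h'.1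
  have h2 : (i.1 : ℝ) ≤ (Q : ℝ) := by exact_mod_cast h'.2
  nlinarith

lemma Kbound_nonneg (hγ : 0 < γ) (hη : 0 ≤ η) (hLbar : 0 ≤ Lbar) :
    0 ≤ Kbound Q σ γ η Lbar dlo := by
  unfold Kbound
  have p1 : 0 ≤ γ ^ 2 * σ ^ 2 / 2 * (Q : ℝ) ^ 2 := by positivity
  have p2 : 0 ≤ γ * η * (Q : ℝ) ^ 2 := mul_nonneg (mul_nonneg hγ.le hη) (sq_nonneg _)
  have p3 : 0 ≤ 2 * (Lbar * Real.exp (-γ * dlo)) :=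
    mul_nonneg (by norm_num) (mul_nonneg hLbar (Real.exp_pos _).le)
  linarith

lemma kmat_abs_le (hγ : 0 < γ) (hη : 0 ≤ η) (hLbar : 0 ≤ Lbar)
    (hLa_bd : ∀ x ∈ Set.Icc dlo dhi, 0 ≤ La x ∧ La x ≤ Lbar)
    (hLb_bd : ∀ x ∈ Set.Icc dlo dhi, 0 ≤ Lb x ∧ Lb x ≤ Lbar)
    (hδ : δ ∈ Aset dlo dhi) (i j : QI Q) :
    |Kmat Q σ γ η La Lb δ i j| ≤ Kbound Q σ γ η Lbar dlo := by
  obtain ⟨hδ1, hδ2⟩ := mem_Aset_iff.mp hδ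
  have hLqa := Lqa_bd hLbar hLa_bd hδ1 (Q := Q) i
  have hLqb := Lqb_bd hLbar hLb_bd hδ2 (Q := Q) i
  have hq2 := qsq_le i
  have hexp1 : Real.exp (-γ * δ.1) ≤ Real.exp (-γ * dlo) := by
    apply Real.exp_le_exp.mpr; nlinarith [hδ1.1]
  have hexp2 : Real.exp (-γ * δ.2) ≤ Real.exp (-γ * dlo) := by
    apply Real.exp_le_exp.mpr; nlinarith [hδ2.1]
  have e1 : 0 ≤ γ ^ 2 * σ ^ 2 / 2 * (i.1 : ℝ) ^ 2 := by positivity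
  have e1' : γ ^ 2 * σ ^ 2 / 2 * (i.1 : ℝ) ^ 2 ≤ γ ^ 2 * σ ^ 2 / 2 * (Q : ℝ) ^ 2 :=
    mul_le_mul_of_nonneg_left hq2 (by positivity)
  have e2 : 0 ≤ γ * η * (i.1 : ℝ) ^ 2 := mul_nonneg (mul_nonneg hγ.le hη) (sq_nonneg _)
  have e2' : γ * η * (i.1 : ℝ) ^ 2 ≤ γ * η * (Q : ℝ) ^ 2 :=
    mul_le_mul_of_nonneg_left hq2 (mul_nonneg hγ.le hη)
  have t1 : |(if j = i then
      γ ^ 2 * σ ^ 2 / 2 * (i.1 : ℝ) ^ 2 + γ * η * (i.1 : ℝ) ^ 2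
        - Lqa La i δ.1 - Lqb Lb i δ.2 else 0)|
      ≤ γ ^ 2 * σ ^ 2 / 2 * (Q : ℝ) ^ 2 + γ * η * (Q : ℝ) ^ 2 + 2 * Lbar := by
    split
    · rw [abs_le]; constructor <;> nlinarith [hLqa.1, hLqa.2, hLqb.1, hLqb.2]
    · rw [abs_zero]; positivity
  have t2 : |(if j.1 = i.1 - 1 then Lqa La i δ.1 * Real.exp (-γ * δ.1) else 0)|
      ≤ Lbar * Real.exp (-γ * dlo) := by
    split
    · rw [abs_of_nonneg (mul_nonneg hLqa.1 (Real.exp_pos _).le)]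
      exact mul_le_mul hLqa.2 hexp1 (Real.exp_pos _).le hLbar
    · rw [abs_zero]
      exact mul_nonneg hLbar (Real.exp_pos _).le
  have t3 : |(if j.1 = i.1 + 1 then Lqb Lb i δ.2 * Real.exp (-γ * δ.2) else 0)|
      ≤ Lbar * Real.exp (-γ * dlo) := by
    split
    · rw [abs_of_nonneg (mul_nonneg hLqb.1 (Real.exp_pos _).le)]
      exact mul_le_mul hLqb.2 hexp2 (Real.exp_pos _).le hLbar
    · rw [abs_zero]
      exact mul_nonneg hLbar (Real.exp_pos _).le
  calc |Kmat Q σ γ η La Lb δ i j| ≤ _ + _ + _ := by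
        simp only [Kmat]
        exact (abs_add_le _ _).trans (add_le_add_left (abs_add_le _ _) _)
    _ ≤ Kbound Q σ γ η Lbar dlo := by
        unfold Kbound; linarith

lemma matExpK_shift (hγ : 0 < γ) (hη : 0 ≤ η) (hh : 0 < h) (hLbar : 0 ≤ Lbar)
    (hLa_bd : ∀ x ∈ Set.Icc dlo dhi, 0 ≤ La x ∧ La x ≤ Lbar)
    (hLb_bd : ∀ x ∈ Set.Icc dlo dhi, 0 ≤ Lb x ∧ Lb x ≤ Lbar)
    (hδ : δ ∈ Aset dlo dhi) (i j : QI Q) :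
    0 ≤ (h • Kmat Q σ γ η La Lb δ
        + (h * (2 * Lbar)) • (1 : Matrix (QI Q) (QI Q) ℝ)) i j := by
  have h0 := kmat_shift_nonneg (σ := σ) hγ hη hLbar hLa_bd hLb_bd hδ i j
  simp only [Matrix.add_apply, Matrix.smul_apply, smul_eq_mul] at h0 ⊢
  calc (0:ℝ) ≤ h * (Kmat Q σ γ η La Lb δ i j
        + 2 * Lbar * (1 : Matrix (QI Q) (QI Q) ℝ) i j) := mul_nonneg hh.le h0
    _ = _ := by ring

lemma matExpK_nonneg (hγ : 0 < γ) (hη : 0 ≤ η) (hh : 0 < h) (hLbar : 0 ≤ Lbar)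
    (hLa_bd : ∀ x ∈ Set.Icc dlo dhi, 0 ≤ La x ∧ La x ≤ Lbar)
    (hLb_bd : ∀ x ∈ Set.Icc dlo dhi, 0 ≤ Lb x ∧ Lb x ≤ Lbar)
    (hδ : δ ∈ Aset dlo dhi) (i j : QI Q) :
    0 ≤ matExp (h • Kmat Q σ γ η La Lb δ) i j :=
  matExp_shift_nonneg (c := h * (2 * Lbar))
    (fun a b => matExpK_shift hγ hη hh hLbar hLa_bd hLb_bd hδ a b) i j

lemma matExpK_diag (hγ : 0 < γ) (hη : 0 ≤ η) (hh : 0 < h) (hLbar : 0 ≤ Lbar)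
    (hLa_bd : ∀ x ∈ Set.Icc dlo dhi, 0 ≤ La x ∧ La x ≤ Lbar)
    (hLb_bd : ∀ x ∈ Set.Icc dlo dhi, 0 ≤ Lb x ∧ Lb x ≤ Lbar)
    (hδ : δ ∈ Aset dlo dhi) (i : QI Q) :
    Real.exp (-(h * (2 * Lbar))) ≤ matExp (h • Kmat Q σ γ η La Lb δ) i i :=
  exp_neg_le_matExp_diag
    (fun a b => matExpK_shift hγ hη hh hLbar hLa_bd hLb_bd hδ a b) i

def expKbound (Q : ℕ) (σ γ η Lbar dlo h : ℝ) : ℝ :=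
  Real.exp (max 1 ((Fintype.card (QI Q) : ℝ) * (h * Kbound Q σ γ η Lbar dlo)))

lemma matExpK_le (hγ : 0 < γ) (hη : 0 ≤ η) (hh : 0 < h) (hLbar : 0 ≤ Lbar)
    (hLa_bd : ∀ x ∈ Set.Icc dlo dhi, 0 ≤ La x ∧ La x ≤ Lbar)
    (hLb_bd : ∀ x ∈ Set.Icc dlo dhi, 0 ≤ Lb x ∧ Lb x ≤ Lbar)
    (hδ : δ ∈ Aset dlo dhi) (i j : QI Q) :
    matExp (h • Kmat Q σ γ η La Lb δ) i j ≤ expKbound Q σ γ η Lbar dlo h := by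
  refine matExp_entry_le (C := h * Kbound Q σ γ η Lbar dlo) ?_ i j
  intro a b
  simp only [Matrix.smul_apply, smul_eq_mul, abs_mul, abs_of_pos hh]
  exact mul_le_mul_of_nonneg_left (kmat_abs_le hγ hη hLbar hLa_bd hLb_bd hδ a b) hh.le

end KmatAux

section CEAux
variable {Q : ℕ} {σ γ η Lbar dlo dhi h : ℝ} {La Lb : ℝ → ℝ} {δ : ℝ × ℝ}

lemma abs_apply_le_norm (φ : Vec Q) (r : QI Q) : |φ r| ≤ ‖φ‖ := by
  have h' := norm_le_pi_norm φ r
  rwa [Real.norm_eq_abs] at h'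

lemma S_lower (hγ : 0 < γ) (hη : 0 ≤ η) (hh : 0 < h) (hLbar : 0 ≤ Lbar)
    (hLa_bd : ∀ x ∈ Set.Icc dlo dhi, 0 ≤ La x ∧ La x ≤ Lbar)
    (hLb_bd : ∀ x ∈ Set.Icc dlo dhi, 0 ≤ Lb x ∧ Lb x ≤ Lbar)
    (hδ : δ ∈ Aset dlo dhi) (φ : Vec Q) (q : QI Q) :
    Real.exp (-(h * (2 * Lbar))) * Real.exp (-(γ * ‖φ‖)) ≤
      (matExp (h • Kmat Q σ γ η La Lb δ)).mulVec (fun r => Real.exp (-γ * φ r)) q := by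
  have hP : ∀ i j : QI Q, 0 ≤ matExp (h • Kmat Q σ γ η La Lb δ) i j :=
    fun i j => matExpK_nonneg (σ := σ) hγ hη hh hLbar hLa_bd hLb_bd hδ i j
  have hdiag := matExpK_diag (σ := σ) hγ hη hh hLbar hLa_bd hLb_bd hδ q
  have hu : Real.exp (-(γ * ‖φ‖)) ≤ Real.exp (-γ * φ q) := by
    apply Real.exp_le_exp.mpr
    have h1 := mul_le_mul_of_nonneg_left
      (le_trans (le_abs_self (φ q)) (abs_apply_le_norm φ q)) hγ.le
    linarith
  calc Real.exp (-(h * (2 * Lbar))) * Real.exp (-(γ * ‖φ‖))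
      ≤ matExp (h • Kmat Q σ γ η La Lb δ) q q * Real.exp (-γ * φ q) :=
        mul_le_mul hdiag hu (Real.exp_pos _).le ((Real.exp_pos _).le.trans hdiag)
    _ ≤ ∑ r : QI Q, matExp (h • Kmat Q σ γ η La Lb δ) q r * Real.exp (-γ * φ r) :=
        Finset.single_le_sum
          (f := fun r => matExp (h • Kmat Q σ γ η La Lb δ) q r * Real.exp (-γ * φ r))
          (fun r _ => mul_nonneg (hP q r) (Real.exp_pos _).le) (Finset.mem_univ q)
    _ = _ := by simp [Matrix.mulVec, dotProduct]

lemma S_upper (hγ : 0 < γ) (hη : 0 ≤ η) (hh : 0 < h) (hLbar : 0 ≤ Lbar)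
    (hLa_bd : ∀ x ∈ Set.Icc dlo dhi, 0 ≤ La x ∧ La x ≤ Lbar)
    (hLb_bd : ∀ x ∈ Set.Icc dlo dhi, 0 ≤ Lb x ∧ Lb x ≤ Lbar)
    (hδ : δ ∈ Aset dlo dhi) (φ : Vec Q) (q : QI Q) :
    (matExp (h • Kmat Q σ γ η La Lb δ)).mulVec (fun r => Real.exp (-γ * φ r)) q ≤
      (Fintype.card (QI Q) : ℝ) * (expKbound Q σ γ η Lbar dlo h * Real.exp (γ * ‖φ‖)) := by
  have hu : ∀ r : QI Q, Real.exp (-γ * φ r) ≤ Real.exp (γ * ‖φ‖) := by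
    intro r
    apply Real.exp_le_exp.mpr
    have h1 := mul_le_mul_of_nonneg_left
      (le_trans (neg_le_abs (φ r)) (abs_apply_le_norm φ r)) hγ.le
    linarith
  calc (matExp (h • Kmat Q σ γ η La Lb δ)).mulVec (fun r => Real.exp (-γ * φ r)) q
      = ∑ r : QI Q, matExp (h • Kmat Q σ γ η La Lb δ) q r * Real.exp (-γ * φ r) := by
        simp [Matrix.mulVec, dotProduct]
    _ ≤ ∑ _r : QI Q, expKbound Q σ γ η Lbar dlo h * Real.exp (γ * ‖φ‖) := by
        refine Finset.sum_le_sum fun r _ => ?_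
        exact mul_le_mul (matExpK_le hγ hη hh hLbar hLa_bd hLb_bd hδ q r) (hu r)
          (Real.exp_pos _).le (Real.exp_pos _).le
    _ = _ := by rw [Finset.sum_const, Finset.card_univ, nsmul_eq_mul]

lemma S_pos (hγ : 0 < γ) (hη : 0 ≤ η) (hh : 0 < h) (hLbar : 0 ≤ Lbar)
    (hLa_bd : ∀ x ∈ Set.Icc dlo dhi, 0 ≤ La x ∧ La x ≤ Lbar)
    (hLb_bd : ∀ x ∈ Set.Icc dlo dhi, 0 ≤ Lb x ∧ Lb x ≤ Lbar)
    (hδ : δ ∈ Aset dlo dhi) (φ : Vec Q) (q : QI Q) :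
    0 < (matExp (h • Kmat Q σ γ η La Lb δ)).mulVec (fun r => Real.exp (-γ * φ r)) q :=
  lt_of_lt_of_le (by positivity) (S_lower hγ hη hh hLbar hLa_bd hLb_bd hδ φ q)

lemma CE_mono (hγ : 0 < γ) (hη : 0 ≤ η) (hh : 0 < h) (hLbar : 0 ≤ Lbar)
    (hLa_bd : ∀ x ∈ Set.Icc dlo dhi, 0 ≤ La x ∧ La x ≤ Lbar)
    (hLb_bd : ∀ x ∈ Set.Icc dlo dhi, 0 ≤ Lb x ∧ Lb x ≤ Lbar)
    (hδ : δ ∈ Aset dlo dhi) {φ ψ : Vec Q} (hle : ∀ r, φ r ≤ ψ r) (q : QI Q) :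
    CE σ γ η La Lb h δ φ q ≤ CE σ γ η La Lb h δ ψ q := by
  have hSψ := S_pos (σ := σ) hγ hη hh hLbar hLa_bd hLb_bd hδ ψ q
  have hSle : (matExp (h • Kmat Q σ γ η La Lb δ)).mulVec
        (fun r => Real.exp (-γ * ψ r)) q
      ≤ (matExp (h • Kmat Q σ γ η La Lb δ)).mulVec (fun r => Real.exp (-γ * φ r)) q := by
    simp only [Matrix.mulVec, dotProduct]
    refine Finset.sum_le_sum fun r _ => ?_
    refine mul_le_mul_of_nonneg_left (Real.exp_le_exp.mpr ?_)
      (matExpK_nonneg hγ hη hh hLbar hLa_bd hLb_bd hδ q r)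
    nlinarith [hle r]
  have hlog := Real.log_le_log hSψ hSle
  unfold CE
  have h1γ : 0 < 1 / γ := by positivity
  nlinarith [hlog]

lemma CE_shift (hγ : 0 < γ) (hη : 0 ≤ η) (hh : 0 < h) (hLbar : 0 ≤ Lbar)
    (hLa_bd : ∀ x ∈ Set.Icc dlo dhi, 0 ≤ La x ∧ La x ≤ Lbar)
    (hLb_bd : ∀ x ∈ Set.Icc dlo dhi, 0 ≤ Lb x ∧ Lb x ≤ Lbar)
    (hδ : δ ∈ Aset dlo dhi) (φ : Vec Q) (c : ℝ) (q : QI Q) :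
    CE σ γ η La Lb h δ (fun r => φ r + c) q = CE σ γ η La Lb h δ φ q + c := by
  have hSpos := S_pos (σ := σ) hγ hη hh hLbar hLa_bd hLb_bd hδ φ q
  have hmv : (matExp (h • Kmat Q σ γ η La Lb δ)).mulVec
        (fun r => Real.exp (-γ * ((fun r => φ r + c) r))) q
      = Real.exp (-γ * c) *
        (matExp (h • Kmat Q σ γ η La Lb δ)).mulVec (fun r => Real.exp (-γ * φ r)) q := by
    simp only [Matrix.mulVec, dotProduct, Finset.mul_sum]
    refine Finset.sum_congr rfl fun r _ => ?_
    rw [show -γ * (φ r + c) = -γ * φ r + -γ * c by ring, Real.exp_add]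
    ring
  unfold CE
  rw [hmv, Real.log_mul (Real.exp_ne_zero _) hSpos.ne', Real.log_exp]
  field_simp
  ring

lemma CE_abs_le (hγ : 0 < γ) (hη : 0 ≤ η) (hh : 0 < h) (hLbar : 0 ≤ Lbar)
    (hLa_bd : ∀ x ∈ Set.Icc dlo dhi, 0 ≤ La x ∧ La x ≤ Lbar)
    (hLb_bd : ∀ x ∈ Set.Icc dlo dhi, 0 ≤ Lb x ∧ Lb x ≤ Lbar)
    (hδ : δ ∈ Aset dlo dhi) (φ : Vec Q) (q : QI Q) :
    |CE σ γ η La Lb h δ φ q| ≤ (1 / γ) *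
      (|Real.log (Real.exp (-(h * (2 * Lbar))) * Real.exp (-(γ * ‖φ‖)))| +
       |Real.log ((Fintype.card (QI Q) : ℝ) *
          (expKbound Q σ γ η Lbar dlo h * Real.exp (γ * ‖φ‖)))|) := by
  have hlo := S_lower (σ := σ) hγ hη hh hLbar hLa_bd hLb_bd hδ φ q
  have hup := S_upper (σ := σ) hγ hη hh hLbar hLa_bd hLb_bd hδ φ q
  have hSpos := S_pos (σ := σ) hγ hη hh hLbar hLa_bd hLb_bd hδ φ q
  have l1 := Real.log_le_log (by positivity) hlo
  have l2 := Real.log_le_log hSpos hup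
  unfold CE
  rw [abs_mul, abs_neg, abs_of_pos (by positivity : (0:ℝ) < 1 / γ)]
  refine mul_le_mul_of_nonneg_left ?_ (by positivity)
  rw [abs_le]
  constructor
  · have := neg_abs_le (Real.log (Real.exp (-(h * (2 * Lbar))) * Real.exp (-(γ * ‖φ‖))))
    have habs2 := abs_nonneg (Real.log ((Fintype.card (QI Q) : ℝ) *
        (expKbound Q σ γ η Lbar dlo h * Real.exp (γ * ‖φ‖))))
    linarith
  · have := le_abs_self (Real.log ((Fintype.card (QI Q) : ℝ) *
        (expKbound Q σ γ η Lbar dlo h * Real.exp (γ * ‖φ‖))))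
    have habs1 := abs_nonneg (Real.log (Real.exp (-(h * (2 * Lbar))) * Real.exp (-(γ * ‖φ‖))))
    linarith

end CEAux

/-- monotonicity, translation invariance, nonexpansiveness. -/
theorem monotone_nonexpansive
    (T : ℝ) (Q : ℕ) (σ γ Φ η dlo dhi Lbar mlo mhi : ℝ)
    (La Lb : ℝ → ℝ) (ν : Measure (ℝ × ℝ)) (m : ℝ × ℝ → ℝ)
    (hT : 0 < T) (hσ : 0 < σ) (hγ : 0 < γ) (hΦ : 0 ≤ Φ) (hη : 0 ≤ η) (hd : dlo < dhi)
    (hLa : ContDiffOn ℝ 1 La (Set.Icc dlo dhi)) (hLb : ContDiffOn ℝ 1 Lb (Set.Icc dlo dhi))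
    (hLa_bd : ∀ x ∈ Set.Icc dlo dhi, 0 ≤ La x ∧ La x ≤ Lbar)
    (hLb_bd : ∀ x ∈ Set.Icc dlo dhi, 0 ≤ Lb x ∧ Lb x ≤ Lbar)
    (hm : Measurable m) (hmlo : 0 < mlo) (hmhi : mlo ≤ mhi)
    (hm_bd : ∀ᵐ δ ∂(volume.restrict (Aset dlo dhi)), mlo ≤ m δ ∧ m δ ≤ mhi)
    (hν : ν = (volume.restrict (Aset dlo dhi)).withDensity fun δ => ENNReal.ofReal (m δ))
    (hνprob : IsProbabilityMeasure ν)
    (h lam : ℝ) (hh : 0 < h) (hlam : 0 < lam) :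
    (∀ φ ψ : Vec Q, (∀ q : QI Q, φ q ≤ ψ q) →
      ∀ q : QI Q, Top σ γ η La Lb ν h lam φ q ≤ Top σ γ η La Lb ν h lam ψ q) ∧
    (∀ φ : Vec Q, ∀ c : ℝ, ∀ q : QI Q,
      Top σ γ η La Lb ν h lam (fun r => φ r + c) q = Top σ γ η La Lb ν h lam φ q + c) ∧
    (∀ φ ψ : Vec Q,
      ‖Top σ γ η La Lb ν h lam φ - Top σ γ η La Lb ν h lam ψ‖ ≤ ‖φ - ψ‖) := by
  have hd' : dlo ≤ dhi := hd.le
  have hdlo : dlo ∈ Set.Icc dlo dhi := ⟨le_refl _, hd'⟩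
  have hLbar : 0 ≤ Lbar := (hLa_bd dlo hdlo).1.trans (hLa_bd dlo hdlo).2
  have hhl : 0 < h * lam := mul_pos hh hlam
  have hAmeas : MeasurableSet (Aset dlo dhi) := measurableSet_Icc.prod measurableSet_Icc
  have hae : ∀ᵐ δ ∂ν, δ ∈ Aset dlo dhi := by
    rw [hν]
    exact (withDensity_absolutelyContinuous _ _).ae_le (ae_restrict_mem hAmeas)
  -- continuous extensions of `La`, `Lb`
  set La' : ℝ → ℝ := fun x => La (max dlo (min x dhi)) with hLa'def
  set Lb' : ℝ → ℝ := fun x => Lb (max dlo (min x dhi)) with hLb'def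
  have hproj : ∀ x : ℝ, max dlo (min x dhi) ∈ Set.Icc dlo dhi := fun x =>
    ⟨le_max_left _ _, max_le hd' (min_le_right _ _)⟩
  have hLa'c : Continuous La' :=
    (hLa.continuousOn).comp_continuous (by fun_prop) hproj
  have hLb'c : Continuous Lb' :=
    (hLb.continuousOn).comp_continuous (by fun_prop) hproj
  have hLa'eq : ∀ x ∈ Set.Icc dlo dhi, La' x = La x := by
    intro x hx
    simp only [hLa'def]
    rw [min_eq_left hx.2, max_eq_right hx.1]
  have hLb'eq : ∀ x ∈ Set.Icc dlo dhi, Lb' x = Lb x := by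
    intro x hx
    simp only [hLb'def]
    rw [min_eq_left hx.2, max_eq_right hx.1]
  have hKeq : ∀ δ ∈ Aset dlo dhi, Kmat Q σ γ η La Lb δ = Kmat Q σ γ η La' Lb' δ := by
    intro δ hδ
    obtain ⟨h1, h2⟩ := mem_Aset_iff.mp hδ
    ext i j
    simp only [Kmat, Lqa, Lqb, hLa'eq δ.1 h1, hLb'eq δ.2 h2]
  have hCEeq : ∀ (φ : Vec Q) (q : QI Q), ∀ δ ∈ Aset dlo dhi,
      CE σ γ η La Lb h δ φ q = CE σ γ η La' Lb' h δ φ q := by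
    intro φ q δ hδ
    unfold CE
    rw [hKeq δ hδ]
  -- measurability
  have hKmeas : ∀ i j : QI Q, Measurable fun δ : ℝ × ℝ => Kmat Q σ γ η La' Lb' δ i j := by
    intro i j
    have m1 : Measurable fun δ : ℝ × ℝ => La' δ.1 := hLa'c.measurable.comp measurable_fst
    have m2 : Measurable fun δ : ℝ × ℝ => Lb' δ.2 := hLb'c.measurable.comp measurable_snd
    have mLqa : Measurable fun δ : ℝ × ℝ => Lqa La' i δ.1 := by
      unfold Lqa
      exact measurable_ite_const _ m1 measurable_const
    have mLqb : Measurable fun δ : ℝ × ℝ => Lqb Lb' i δ.2 := by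
      unfold Lqb
      exact measurable_ite_const _ m2 measurable_const
    have me1 : Measurable fun δ : ℝ × ℝ => Real.exp (-γ * δ.1) :=
      Real.measurable_exp.comp (measurable_fst.const_mul (-γ))
    have me2 : Measurable fun δ : ℝ × ℝ => Real.exp (-γ * δ.2) :=
      Real.measurable_exp.comp (measurable_snd.const_mul (-γ))
    simp only [Kmat]
    refine Measurable.add (Measurable.add ?_ ?_) ?_
    · exact measurable_ite_const _ ((measurable_const.sub mLqa).sub mLqb) measurable_const
    · exact measurable_ite_const _ (mLqa.mul me1) measurable_const
    · exact measurable_ite_const _ (mLqb.mul me2) measurable_const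
  have hmeas : ∀ (φ : Vec Q) (q : QI Q),
      Measurable fun δ : ℝ × ℝ => Real.exp (CE σ γ η La' Lb' h δ φ q / (h * lam)) := by
    intro φ q
    have hK' : ∀ i j : QI Q, Measurable fun δ : ℝ × ℝ => (h • Kmat Q σ γ η La' Lb' δ) i j := by
      intro i j
      simpa [Matrix.smul_apply, smul_eq_mul] using (hKmeas i j).const_mul h
    have hPm := measurable_matExp_entry (M := fun δ : ℝ × ℝ => h • Kmat Q σ γ η La' Lb' δ) hK'
    have hS : Measurable fun δ : ℝ × ℝ =>
        (matExp (h • Kmat Q σ γ η La' Lb' δ)).mulVec (fun r => Real.exp (-γ * φ r)) q := by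
      simp only [Matrix.mulVec, dotProduct]
      exact Finset.measurable_sum _ fun r _ => (hPm q r).mul measurable_const
    unfold CE
    exact Real.measurable_exp.comp
      (((Real.measurable_log.comp hS).const_mul (-(1 / γ))).div_const (h * lam))
  -- integrability and positivity of the integrals
  have key : ∀ (φ : Vec Q) (q : QI Q),
      Integrable (fun δ => Real.exp (CE σ γ η La Lb h δ φ q / (h * lam))) ν ∧
      0 < ∫ δ, Real.exp (CE σ γ η La Lb h δ φ q / (h * lam)) ∂ν := by
    intro φ q
    obtain ⟨C, hC⟩ : ∃ C : ℝ, ∀ δ ∈ Aset dlo dhi, |CE σ γ η La Lb h δ φ q| ≤ C :=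
      ⟨_, fun δ hδ => CE_abs_le hγ hη hh hLbar hLa_bd hLb_bd hδ φ q⟩
    have haesm : AEStronglyMeasurable
        (fun δ => Real.exp (CE σ γ η La Lb h δ φ q / (h * lam))) ν := by
      refine (hmeas φ q).aestronglyMeasurable.congr ?_
      filter_upwards [hae] with δ hδ
      rw [hCEeq φ q δ hδ]
    have hbd : ∀ᵐ δ ∂ν,
        ‖Real.exp (CE σ γ η La Lb h δ φ q / (h * lam))‖ ≤ Real.exp (C / (h * lam)) := by
      filter_upwards [hae] with δ hδ
      rw [Real.norm_eq_abs, abs_of_pos (Real.exp_pos _)]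
      apply Real.exp_le_exp.mpr
      apply (div_le_div_iff_of_pos_right hhl).mpr
      exact le_trans (le_abs_self _) (hC δ hδ)
    have hint : Integrable (fun δ => Real.exp (CE σ γ η La Lb h δ φ q / (h * lam))) ν :=
      Integrable.mono' (integrable_const _) haesm hbd
    refine ⟨hint, ?_⟩
    have hlow : ∀ᵐ δ ∂ν, Real.exp (-C / (h * lam)) ≤
        Real.exp (CE σ γ η La Lb h δ φ q / (h * lam)) := by
      filter_upwards [hae] with δ hδ
      apply Real.exp_le_exp.mpr
      apply (div_le_div_iff_of_pos_right hhl).mpr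
      have := neg_abs_le (CE σ γ η La Lb h δ φ q)
      linarith [hC δ hδ]
    have hI := integral_mono_ae (integrable_const (Real.exp (-C / (h * lam)))) hint hlow
    rw [integral_const] at hI
    simp only [probReal_univ, measure_univ, ENNReal.toReal_one, one_smul] at hI
    exact lt_of_lt_of_le (Real.exp_pos _) hI
  have part1 : ∀ φ ψ : Vec Q, (∀ q : QI Q, φ q ≤ ψ q) →
      ∀ q : QI Q, Top σ γ η La Lb ν h lam φ q ≤ Top σ γ η La Lb ν h lam ψ q := by
    intro φ ψ hle q
    simp only [Top]
    refine mul_le_mul_of_nonneg_left ?_ hhl.le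
    refine Real.log_le_log (key φ q).2 ?_
    refine integral_mono_ae (key φ q).1 (key ψ q).1 ?_
    filter_upwards [hae] with δ hδ
    apply Real.exp_le_exp.mpr
    apply (div_le_div_iff_of_pos_right hhl).mpr
    exact CE_mono hγ hη hh hLbar hLa_bd hLb_bd hδ hle q
  have part2 : ∀ (φ : Vec Q) (c : ℝ) (q : QI Q),
      Top σ γ η La Lb ν h lam (fun r => φ r + c) q = Top σ γ η La Lb ν h lam φ q + c := by
    intro φ c q
    simp only [Top]
    have heq : ∫ δ, Real.exp (CE σ γ η La Lb h δ (fun r => φ r + c) q / (h * lam)) ∂ν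
        = Real.exp (c / (h * lam)) *
          ∫ δ, Real.exp (CE σ γ η La Lb h δ φ q / (h * lam)) ∂ν := by
      rw [← integral_const_mul]
      refine integral_congr_ae ?_
      filter_upwards [hae] with δ hδ
      rw [CE_shift hγ hη hh hLbar hLa_bd hLb_bd hδ φ c q, add_div, Real.exp_add]
      ring
    rw [heq, Real.log_mul (Real.exp_ne_zero _) (key φ q).2.ne', Real.log_exp, mul_add,
      mul_div_cancel₀ c hhl.ne']
    ring
  refine ⟨part1, part2, ?_⟩
  intro φ ψ
  set c := ‖φ - ψ‖ with hc
  have hcnn : 0 ≤ c := norm_nonneg _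
  have hb : ∀ q : QI Q, |Top σ γ η La Lb ν h lam φ q - Top σ γ η La Lb ν h lam ψ q| ≤ c := by
    intro q
    have hd1 : ∀ r : QI Q, |φ r - ψ r| ≤ c := by
      intro r
      have h' := norm_le_pi_norm (φ - ψ) r
      rwa [Real.norm_eq_abs] at h'
    have h1 : ∀ r : QI Q, φ r ≤ ψ r + c := fun r => by
      have := abs_le.mp (hd1 r); linarith [this.2]
    have h2 : ∀ r : QI Q, ψ r ≤ φ r + c := fun r => by
      have := abs_le.mp (hd1 r); linarith [this.1]
    have k1 : Top σ γ η La Lb ν h lam φ q ≤ Top σ γ η La Lb ν h lam ψ q + c := by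
      have := part1 φ (fun r => ψ r + c) h1 q
      rwa [part2 ψ c q] at this
    have k2 : Top σ γ η La Lb ν h lam ψ q ≤ Top σ γ η La Lb ν h lam φ q + c := by
      have := part1 ψ (fun r => φ r + c) h2 q
      rwa [part2 φ c q] at this
    rw [abs_le]
    constructor <;> linarith
  refine (pi_norm_le_iff_of_nonneg hcnn).mpr fun q => ?_
  rw [Pi.sub_apply, Real.norm_eq_abs]
  exact hb q


end MM
end
end
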